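/- arXiv:1407.7007 — 4 statements merged into one kernel-verified Lean document; each statement's English description precedes it below -/
import Mathlib

section
/- Let A = {d_1, …, d_n} be a generalized arithmetic sequence of positive integers with n ≥ 4, gcd(d_1, …, d_n) = 1, and such that A minimally generates the numerical semigroup ℕd_1 + … + ℕd_n. Then the toric ideal I_A is not a complete intersection. -/
open MvPolynomial

/-- The `(p,q)`-Fibonacci sequence: `F 0 = 0`, `F 1 = 1`, `F (n+2) = p * F (n+1) + q * F n`. -/
def pqFib (p q : ℕ) : ℕ → ℕ
  | 0 => 0
  | 1 => 1
  | n + 2 => p * pqFib p q (n + 1) + q * pqFib p q n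

/-- The `(p,q)`-Lucas sequence: `L 0 = 2`, `L 1 = p`, `L (n+2) = p * L (n+1) + q * L n`. -/
def pqLucas (p q : ℕ) : ℕ → ℕ
  | 0 => 2
  | 1 => p
  | n + 2 => p * pqLucas p q (n + 1) + q * pqLucas p q n

/-- The toric ideal of the affine monomial curve `t ↦ (t^{d 0}, …, t^{d (n-1)})`:
the kernel of the `k`-algebra map `k[x_1,…,x_n] → k[t]`, `x_i ↦ t^{d i}`. -/
noncomputable def toricIdeal (k : Type*) [Field k] {n : ℕ} (d : Fin n → ℕ) :
    Ideal (MvPolynomial (Fin n) k) :=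
  RingHom.ker (MvPolynomial.aeval
    (fun i : Fin n => (Polynomial.X : Polynomial k) ^ d i)).toRingHom

/-- The toric ideal `I_A` is a complete intersection iff it can be generated by
`n - 1` elements. -/
def IsCI (k : Type*) [Field k] {n : ℕ} (d : Fin n → ℕ) : Prop :=
  ∃ g : Fin (n - 1) → MvPolynomial (Fin n) k,
    Ideal.span (Set.range g) = toricIdeal k d

/-- The toric ideal of the projective monomial curve: the kernel of the `k`-algebra map
`k[x_1,…,x_{n+1}] → k[t,u]`, `x_i ↦ t^{d i} u^{D - d i}` for `i ≤ n` and
`x_{n+1} ↦ u^D`, where `D = max A`. -/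
noncomputable def projToricIdeal (k : Type*) [Field k] {n : ℕ} (d : Fin n → ℕ) :
    Ideal (MvPolynomial (Fin (n + 1)) k) :=
  RingHom.ker (MvPolynomial.aeval (fun i : Fin (n + 1) =>
    if h : (i : ℕ) < n then
      (X 0 : MvPolynomial (Fin 2) k) ^ d ⟨i, h⟩ *
        (X 1 : MvPolynomial (Fin 2) k) ^ (Finset.univ.sup d - d ⟨i, h⟩)
    else (X 1 : MvPolynomial (Fin 2) k) ^ (Finset.univ.sup d))).toRingHom

/-- The projective toric ideal `I_{A*}` is a complete intersection iff it can be
generated by `n - 1` elements. -/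
def ProjIsCI (k : Type*) [Field k] {n : ℕ} (d : Fin n → ℕ) : Prop :=
  ∃ g : Fin (n - 1) → MvPolynomial (Fin (n + 1)) k,
    Ideal.span (Set.range g) = projToricIdeal k d

/-- `d 0 < d 1 < ⋯` is a generalized arithmetic sequence: there are positive
integers `h, e` with `d i = h * d 0 + i * e` for every `i ≥ 1`. -/
def IsGenArith {n : ℕ} (d : Fin n → ℕ) : Prop :=
  ∃ h e : ℕ, 0 < h ∧ 0 < e ∧
    ∀ i : Fin n, 0 < (i : ℕ) → d i = h * d ⟨0, i.pos⟩ + (i : ℕ) * e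

/-- `d 0 < d 1 < ⋯` is an increasing arithmetic sequence: there is a positive
integer `e` with `d i = d 0 + i * e` for every `i`. -/
def IsArithFn {n : ℕ} (d : Fin n → ℕ) : Prop :=
  ∃ e : ℕ, 0 < e ∧ ∀ i : Fin n, 0 < (i : ℕ) → d i = d ⟨0, i.pos⟩ + (i : ℕ) * e

/-- `A = {d 0, …, d (n-1)}` minimally generates the numerical semigroup
`ℕ d 0 + ⋯ + ℕ d (n-1)`: no `d i` lies in the subsemigroup generated by the rest. -/
def MinimallyGenerates {n : ℕ} (d : Fin n → ℕ) : Prop :=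
  ∀ i : Fin n, ¬ ∃ α : Fin n → ℕ, α i = 0 ∧ d i = ∑ j, α j * d j


namespace Stmt13Aux

open Finsupp
open scoped Classical

variable {k : Type*} [Field k] {n : ℕ}

/-- weight of an exponent vector -/
def W (d : Fin n → ℕ) (β : Fin n →₀ ℕ) : ℕ := ∑ j, β j * d j

lemma W_add (d : Fin n → ℕ) (α β : Fin n →₀ ℕ) : W d (α + β) = W d α + W d β := by
  simp [W, Finsupp.add_apply, add_mul, Finset.sum_add_distrib]

lemma W_single (d : Fin n → ℕ) (i : Fin n) (c : ℕ) : W d (Finsupp.single i c) = c * d i := by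
  simp [W, Finsupp.single_apply]

lemma W_zero (d : Fin n → ℕ) : W d 0 = 0 := by simp [W]

lemma W_eq_zero (d : Fin n → ℕ) (hpos : ∀ i, 0 < d i) (β : Fin n →₀ ℕ) (h : W d β = 0) :
    β = 0 := by
  ext j
  have h2 := (Finset.sum_eq_zero_iff).mp h j (Finset.mem_univ j)
  have hd := hpos j
  simp only [Finsupp.coe_zero, Pi.zero_apply]
  rcases Nat.mul_eq_zero.mp h2 with h3 | h3
  · exact h3
  · omega

/-- the coefficient-sum functional attached to a predicate on exponents -/
noncomputable def phi (P : (Fin n →₀ ℕ) → Prop) (f : MvPolynomial (Fin n) k) : k :=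
  ∑ α ∈ f.support, if P α then coeff α f else 0

lemma phi_eq_sum (P : (Fin n →₀ ℕ) → Prop) (f : MvPolynomial (Fin n) k)
    (T : Finset (Fin n →₀ ℕ)) (hT : f.support ⊆ T) :
    phi P f = ∑ α ∈ T, if P α then coeff α f else 0 := by
  classical
  refine Finset.sum_subset hT ?_
  intro α _ hα
  rw [MvPolynomial.notMem_support_iff.mp hα]
  split <;> rfl

lemma phi_add (P : (Fin n →₀ ℕ) → Prop) (f g : MvPolynomial (Fin n) k) :
    phi P (f + g) = phi P f + phi P g := by
  classical
  rw [phi_eq_sum P (f+g) (f.support ∪ g.support ∪ (f+g).support) (by intro x hx; simp [hx]),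
      phi_eq_sum P f (f.support ∪ g.support ∪ (f+g).support) (by intro x hx; simp [hx]),
      phi_eq_sum P g (f.support ∪ g.support ∪ (f+g).support) (by intro x hx; simp [hx]),
      ← Finset.sum_add_distrib]
  refine Finset.sum_congr rfl ?_
  intro α _
  rw [coeff_add]
  split <;> simp

lemma phi_zero (P : (Fin n →₀ ℕ) → Prop) : phi (k := k) P 0 = 0 := by simp [phi]

lemma phi_sub (P : (Fin n →₀ ℕ) → Prop) (f g : MvPolynomial (Fin n) k) :
    phi P (f - g) = phi P f - phi P g := by
  have h2 := phi_add P (f - g) g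
  rw [sub_add_cancel] at h2
  exact eq_sub_of_add_eq h2.symm

lemma phi_sum (P : (Fin n →₀ ℕ) → Prop) {ι : Type*} (s : Finset ι)
    (f : ι → MvPolynomial (Fin n) k) :
    phi P (∑ i ∈ s, f i) = ∑ i ∈ s, phi P (f i) := by
  classical
  induction s using Finset.cons_induction with
  | empty => simp [phi_zero]
  | cons a s ha ih => rw [Finset.sum_cons, Finset.sum_cons, phi_add, ih]

lemma phi_monomial (P : (Fin n →₀ ℕ) → Prop) (γ : Fin n →₀ ℕ) (c : k) :
    phi P (monomial γ c) = if P γ then c else 0 := by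
  classical
  by_cases hc : c = 0
  · subst hc
    rw [map_zero, phi_zero]
    split <;> rfl
  · rw [phi, MvPolynomial.support_monomial, if_neg hc, Finset.sum_singleton,
      MvPolynomial.coeff_monomial, if_pos rfl]


lemma W_support_sum (d : Fin n → ℕ) (β : Fin n →₀ ℕ) :
    W d β = ∑ i ∈ β.support, β i * d i := by
  refine (Finset.sum_subset (Finset.subset_univ β.support) ?_).symm
  intro i _ hi
  rw [Finsupp.notMem_support_iff.mp hi, zero_mul]

-- prod-pow helper
lemma prod_pow_eq (d : Fin n → ℕ) (β : Fin n →₀ ℕ) :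
    (β.prod fun i c => ((Polynomial.X : Polynomial k) ^ d i) ^ c) =
      Polynomial.X ^ (W d β) := by
  rw [Finsupp.prod]
  have h1 : ∀ i ∈ β.support, ((Polynomial.X : Polynomial k) ^ d i) ^ β i
      = Polynomial.X ^ (β i * d i) := by
    intro i _
    rw [← pow_mul, mul_comm]
  rw [Finset.prod_congr rfl h1,
    Finset.prod_pow_eq_pow_sum β.support (fun i => β i * d i) (Polynomial.X : Polynomial k)]
  rw [← W_support_sum]

lemma mem_toricIdeal_iff (d : Fin n → ℕ) (p : MvPolynomial (Fin n) k) :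
    p ∈ toricIdeal k d ↔
      (aeval (fun i : Fin n => (Polynomial.X : Polynomial k) ^ d i)) p = 0 := by
  rw [toricIdeal, RingHom.mem_ker]
  rfl

lemma ker_sum (d : Fin n → ℕ) (p : MvPolynomial (Fin n) k) (hp : p ∈ toricIdeal k d)
    (s : ℕ) :
    ∑ β ∈ p.support, (if W d β = s then coeff β p else 0) = (0:k) := by
  have h0 := (mem_toricIdeal_iff d p).mp hp
  have h1 : (aeval (fun i : Fin n => (Polynomial.X : Polynomial k) ^ d i)) p =
      ∑ β ∈ p.support, Polynomial.C (coeff β p) * Polynomial.X ^ (W d β) := by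
    conv_lhs => rw [← p.support_sum_monomial_coeff]
    rw [map_sum]
    refine Finset.sum_congr rfl ?_
    intro β _
    rw [aeval_monomial, prod_pow_eq]
    rfl
  have h2 := congrArg (fun q => Polynomial.coeff q s) (h1.symm.trans h0)
  simp only [Polynomial.finset_sum_coeff, Polynomial.coeff_C_mul, Polynomial.coeff_X_pow,
    Polynomial.coeff_zero, mul_ite, mul_one, mul_zero] at h2
  rw [← h2]
  refine Finset.sum_congr rfl ?_
  intro β _
  congr 1
  simp only [eq_iff_iff]
  tauto

lemma ker_sum' (d : Fin n → ℕ) (p : MvPolynomial (Fin n) k) (hp : p ∈ toricIdeal k d)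
    (t s : ℕ) :
    ∑ β ∈ p.support, (if t + W d β = s then coeff β p else 0) = (0:k) := by
  by_cases hts : t ≤ s
  · have hc : ∀ β ∈ p.support, (if t + W d β = s then coeff β p else 0)
        = (if W d β = s - t then coeff β p else 0) := by
      intro β _
      have hiff : (t + W d β = s) ↔ (W d β = s - t) := by omega
      simp only [hiff]
    rw [Finset.sum_congr rfl hc]
    exact ker_sum d p hp (s - t)
  · refine Finset.sum_eq_zero ?_
    intro β _
    rw [if_neg]
    omega


/-- validity of a functional predicate at weight `s₀` -/
def Valid (d : Fin n → ℕ) (P : (Fin n →₀ ℕ) → Prop) (s₀ : ℕ) : Prop :=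
  (∀ α, P α → W d α = s₀) ∧
    ∀ γ : Fin n →₀ ℕ, γ ≠ 0 →
      (∀ β, W d γ + W d β = s₀ → P (γ + β)) ∨ (∀ β, ¬ P (γ + β))

lemma phi_monomial_mul (d : Fin n → ℕ) (P : (Fin n →₀ ℕ) → Prop) (s₀ : ℕ)
    (hval : Valid d P s₀) (γ : Fin n →₀ ℕ) (c : k) (p : MvPolynomial (Fin n) k)
    (hp : p ∈ toricIdeal k d) :
    phi P (monomial γ c * p) = (if γ = 0 then c else 0) * phi P p := by
  obtain ⟨hP, hV⟩ := hval
  by_cases hγ : γ = 0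
  · subst hγ
    rw [if_pos rfl]
    have hco : ∀ α : Fin n →₀ ℕ, coeff α (monomial (0 : Fin n →₀ ℕ) c * p) = c * coeff α p := by
      intro α
      rw [MvPolynomial.coeff_monomial_mul', if_pos (zero_le : 0 ≤ α), tsub_zero]
    have hsupp : (monomial (0 : Fin n →₀ ℕ) c * p).support ⊆ p.support := by
      intro α hα
      rw [MvPolynomial.mem_support_iff] at hα ⊢
      intro h0
      rw [hco α, h0, mul_zero] at hα
      exact hα rfl
    rw [phi_eq_sum P _ _ hsupp, phi, Finset.mul_sum]
    refine Finset.sum_congr rfl ?_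
    intro α _
    rw [hco α, mul_ite, mul_zero]
  · rw [if_neg hγ, zero_mul]
    have hsupp : (monomial γ c * p).support ⊆ p.support.image (fun β => γ + β) := by
      intro α hα
      rw [MvPolynomial.mem_support_iff, MvPolynomial.coeff_monomial_mul'] at hα
      by_cases hle : γ ≤ α
      · rw [if_pos hle] at hα
        refine Finset.mem_image.mpr ⟨α - γ, ?_, add_tsub_cancel_of_le hle⟩
        rw [MvPolynomial.mem_support_iff]
        intro h0
        rw [h0, mul_zero] at hα
        exact hα rfl
      · rw [if_neg hle] at hα
        exact absurd rfl hα
    rw [phi_eq_sum P _ _ hsupp,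
      Finset.sum_image (by intro x _ y _ h; exact add_left_cancel h)]
    have hterm : ∀ β ∈ p.support,
        (if P (γ + β) then coeff (γ + β) (monomial γ c * p) else 0)
          = (if P (γ + β) then c * coeff β p else 0) := by
      intro β _
      rw [MvPolynomial.coeff_monomial_mul', if_pos le_self_add, add_tsub_cancel_left]
    rw [Finset.sum_congr rfl hterm]
    rcases hV γ hγ with hfull | hempty
    · have hiff : ∀ β, P (γ + β) ↔ (W d γ + W d β = s₀) := by
        intro β
        constructor
        · intro h
          rw [← W_add]
          exact hP _ h
        · exact hfull β
      calc ∑ β ∈ p.support, (if P (γ + β) then c * coeff β p else 0)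
          = c * ∑ β ∈ p.support, (if W d γ + W d β = s₀ then coeff β p else 0) := by
            rw [Finset.mul_sum]
            refine Finset.sum_congr rfl ?_
            intro β _
            simp only [hiff β, mul_ite, mul_zero]
        _ = 0 := by rw [ker_sum' d p hp, mul_zero]
    · refine Finset.sum_eq_zero ?_
      intro β _
      rw [if_neg (hempty β)]

lemma phi_ringmul (d : Fin n → ℕ) (P : (Fin n →₀ ℕ) → Prop) (s₀ : ℕ)
    (hval : Valid d P s₀) (q p : MvPolynomial (Fin n) k) (hp : p ∈ toricIdeal k d) :
    phi P (q * p) = constantCoeff q * phi P p := by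
  conv_lhs => rw [← q.support_sum_monomial_coeff, Finset.sum_mul, phi_sum]
  have hterm : ∀ γ ∈ q.support, phi P (monomial γ (coeff γ q) * p)
      = (if γ = 0 then coeff γ q else 0) * phi P p := by
    intro γ _
    rw [phi_monomial_mul d P s₀ hval γ _ p hp]
  rw [Finset.sum_congr rfl hterm, ← Finset.sum_mul]
  congr 1
  rw [Finset.sum_ite_eq' q.support 0 (fun γ => coeff γ q)]
  by_cases h0 : (0 : Fin n →₀ ℕ) ∈ q.support
  · rw [if_pos h0]
    rfl
  · rw [if_neg h0]
    rw [MvPolynomial.notMem_support_iff] at h0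
    rw [show constantCoeff q = coeff 0 q from rfl, h0]

lemma contra (d : Fin n → ℕ) (hn : 1 ≤ n) (hCI : IsCI k d)
    (P : Fin n → ((Fin n →₀ ℕ) → Prop)) (s : Fin n → ℕ)
    (hval : ∀ t, Valid d (P t) (s t))
    (b : Fin n → MvPolynomial (Fin n) k) (hb : ∀ t, b t ∈ toricIdeal k d)
    (hδ : ∀ t t', phi (P t) (b t') = if t = t' then (1:k) else 0) : False := by
  obtain ⟨g, hg⟩ := hCI
  have hmem : ∀ t', ∃ c : Fin (n-1) → MvPolynomial (Fin n) k, ∑ j, c j * g j = b t' := by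
    intro t'
    have h1 : b t' ∈ Ideal.span (Set.range g) := by
      rw [hg]; exact hb t'
    exact Ideal.mem_span_range_iff_exists_fun.mp h1
  choose c hc using hmem
  have hgI : ∀ j, g j ∈ toricIdeal k d := by
    intro j
    rw [← hg]
    exact Ideal.subset_span ⟨j, rfl⟩
  let A : Matrix (Fin n) (Fin (n-1)) k := fun t j => phi (P t) (g j)
  let B : Matrix (Fin (n-1)) (Fin n) k := fun j t' => constantCoeff (c t' j)
  have hAB : A * B = 1 := by
    ext t t'
    rw [Matrix.mul_apply, Matrix.one_apply]
    have h2 : phi (P t) (b t') = ∑ j, phi (P t) (c t' j * g j) := by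
      rw [← hc t', phi_sum]
    rw [← hδ t t', h2]
    refine Finset.sum_congr rfl ?_
    intro j _
    rw [phi_ringmul d (P t) (s t) (hval t) _ _ (hgI j)]
    simp [A, B, mul_comm]
  have h1 : (1 : Matrix (Fin n) (Fin n) k).rank = n := by
    rw [Matrix.rank_one, Fintype.card_fin]
  have h2 : (A * B).rank ≤ A.rank := Matrix.rank_mul_le_left A B
  have h3 : A.rank ≤ Fintype.card (Fin (n-1)) := Matrix.rank_le_card_width A
  rw [Fintype.card_fin] at h3
  rw [hAB, h1] at h2
  omega


lemma int_coprime (a e : ℕ) (h : Nat.Coprime a e) : IsCoprime (a : ℤ) (e : ℤ) :=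
  Int.isCoprime_iff_gcd_eq_one.mpr (by simpa [Int.gcd_natCast_natCast] using h)

lemma pos_factor (x e : ℤ) (he : 0 < e) (h : 0 < x * e) : 0 < x := by nlinarith

lemma dvd_contra (a e : ℕ) (x y : ℤ) (hcop : Nat.Coprime a e)
    (heq : x * (a:ℤ) = y * (e:ℤ)) (hx : 0 < x) (ha : 0 < a) (he : 0 < e)
    (hy : y < (a:ℤ)) : False := by
  have hco := int_coprime a e hcop
  have ha' : (0:ℤ) < a := by exact_mod_cast ha
  have he' : (0:ℤ) < e := by exact_mod_cast he
  have hdvd : (a:ℤ) ∣ y * e := ⟨x, by linarith [heq]⟩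
  have hdvd2 : (a:ℤ) ∣ y := hco.dvd_of_dvd_mul_right hdvd
  have hypos : 0 < y * e := by
    rw [← heq]
    positivity
  have hy0 : 0 < y := pos_factor y e he' hypos
  have := Int.le_of_dvd hy0 hdvd2
  omega

lemma mul_ge_self_of_pos (h B : ℕ) (hB : 1 ≤ B) : h ≤ h * B :=
  Nat.le_mul_of_pos_right h hB

lemma arith1 (a e h m A E B F c B' F' : ℕ)
    (hcop : Nat.Coprime a e) (hh : 1 ≤ h) (he : 1 ≤ e) (ha : 1 ≤ a)
    (hm1 : 1 ≤ m) (hma : m < a)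
    (hA : 1 ≤ A) (hAE : A ≤ E) (hEA : E + A ≤ a * A)
    (hBF : B ≤ F) (hB0 : B = 0 → F = 0)
    (hc : 1 ≤ c) (hB'0 : B' = 0 → F' = 0)
    (eq1 : h*A*a + E*e + (h*B*a + F*e) = 2*h*a + m*e)
    (eq2 : (c + h*B')*a + F'*e + (h*A*a + E*e) = 2*h*a + m*e) : False := by
  have E1 : (h:ℤ)*A*a + E*e + ((h:ℤ)*B*a + F*e) = 2*h*a + m*e := by exact_mod_cast eq1
  have E2 : ((c:ℤ) + h*B')*a + F'*e + ((h:ℤ)*A*a + E*e) = 2*(h:ℤ)*a + m*e := by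
    exact_mod_cast eq2
  have ha' : (0:ℤ) < a := by exact_mod_cast ha
  have he' : (0:ℤ) < e := by exact_mod_cast he
  have hh' : (0:ℤ) < h := by exact_mod_cast hh
  rcases Nat.lt_or_ge (A + B) 3 with hAB | hAB
  · -- A + B ≤ 2
    rcases Nat.lt_or_ge B 1 with hB | hB
    · -- B = 0
      have hBz : B = 0 := by omega
      have hFz : F = 0 := hB0 hBz
      subst hBz hFz
      rcases Nat.lt_or_ge A 2 with hA1 | hA2
      · -- A = 1
        have hA1' : A = 1 := by omega
        subst hA1'
        have key : ((E:ℤ) - m) * e = (h:ℤ) * a := by linear_combination E1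
        have hEm : (0:ℤ) < (E:ℤ) - m := by
          refine pos_factor _ _ he' ?_
          rw [key]
          positivity
        exact dvd_contra a e (h:ℤ) ((E:ℤ) - m) hcop key.symm hh' ha he
          (by push_cast at hEm ⊢; omega)
      · -- A = 2
        have hA2' : A = 2 := by omega
        subst hA2'
        have key : ((E:ℤ) - m) * e = 0 := by linear_combination E1
        have hEm : (E:ℤ) = m := by
          rcases mul_eq_zero.mp key with h1 | h1
          · linarith
          · exfalso; omega
        have key2 : ((c:ℤ) + h*B')*a + F'*e = 0 := by linear_combination E2 - e * hEm
        have hc' : (1:ℤ) ≤ c := by exact_mod_cast hc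
        have hB'nn : (0:ℤ) ≤ (h:ℤ)*B' := by positivity
        have hF'nn : (0:ℤ) ≤ (F':ℤ)*e := by positivity
        have h5 : (0:ℤ) < ((c:ℤ) + h*B')*a := mul_pos (by linarith) ha'
        linarith [key2]
    · -- B = 1, A = 1
      have hB1 : B = 1 := by omega
      have hA1 : A = 1 := by omega
      subst hB1 hA1
      have key : ((E:ℤ) + F - m) * e = 0 := by linear_combination E1
      have hEF : (E:ℤ) + F = m := by
        rcases mul_eq_zero.mp key with h1 | h1
        · linarith
        · exfalso; omega
      have hF1 : 1 ≤ F := by omega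
      have hEm : (E:ℤ) + 1 ≤ m := by push_cast at hEF ⊢; omega
      have hB'alt : B' = 0 ∨ h ≤ h * B' := by
        rcases B' with _ | B''
        · exact Or.inl rfl
        · exact Or.inr (mul_ge_self_of_pos h _ (by omega))
      rcases Nat.lt_trichotomy (c + h * B') h with hlt | heq | hgt
      · have hBz : B' = 0 := by rcases hB'alt with h1 | h1 <;> omega
        have hFz : F' = 0 := hB'0 hBz
        subst hBz hFz
        have key2 : ((h:ℤ) - c) * a = ((E:ℤ) - m) * e := by linear_combination -E2
        have hclt : (c:ℤ) < h := by exact_mod_cast hlt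
        have h3 : (0:ℤ) < ((E:ℤ) - m) * e := by
          rw [← key2]
          exact mul_pos (by linarith) ha'
        have h4 := pos_factor _ _ he' h3
        omega
      · have hBz : B' = 0 := by rcases hB'alt with h1 | h1 <;> omega
        have hFz : F' = 0 := hB'0 hBz
        subst hBz hFz
        have hch : c = h := by omega
        subst hch
        have key2 : ((E:ℤ) - m) * e = 0 := by linear_combination E2
        rcases mul_eq_zero.mp key2 with h1 | h1
        · omega
        · exfalso; omega
      · have hgt' : (h:ℤ) < (c:ℤ) + h*B' := by exact_mod_cast hgt
        have key2 : ((c:ℤ) + h*B' - h) * a = ((m:ℤ) - F' - E) * e := by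
          linear_combination E2
        have hpos : (0:ℤ) < ((m:ℤ) - F' - E) * e := by
          rw [← key2]
          exact mul_pos (by linarith) ha'
        have hy := pos_factor _ _ he' hpos
        exact dvd_contra a e _ _ hcop key2 (by omega) ha he (by push_cast at hy ⊢; omega)
  · -- A + B ≥ 3
    have hAB' : (3:ℤ) ≤ (A:ℤ) + B := by push_cast; omega
    have hx : (0:ℤ) < (h:ℤ)*(A+B) - 2*h := by
      have h6 : (h:ℤ)*3 ≤ (h:ℤ)*((A:ℤ)+B) := mul_le_mul_of_nonneg_left hAB' (le_of_lt hh')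
      linarith
    have key : ((h:ℤ)*(A+B) - 2*h) * a = ((m:ℤ) - E - F) * e := by linear_combination E1
    have hpos : (0:ℤ) < ((m:ℤ) - E - F) * e := by
      rw [← key]
      exact mul_pos hx ha'
    have hy := pos_factor _ _ he' hpos
    exact dvd_contra a e _ _ hcop key hx ha he (by push_cast at hy ⊢; omega)

lemma arith2 (a e h k' c B F : ℕ)
    (hcop : Nat.Coprime a e) (hh : 1 ≤ h) (he : 1 ≤ e) (ha : 1 ≤ a)
    (h3k : 3*k' < a) (hBF3 : F ≤ 3*B) (hBF : B ≤ F)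
    (eq : (c + h*B)*a + F*e = h*k'*a + 3*k'*e) : c = 0 ∧ B = k' ∧ F = 3*k' := by
  have E : ((c:ℤ) + h*B)*a + F*e = (h:ℤ)*k'*a + 3*k'*e := by exact_mod_cast eq
  have ha' : (0:ℤ) < a := by exact_mod_cast ha
  have he' : (0:ℤ) < e := by exact_mod_cast he
  have hh' : (0:ℤ) < h := by exact_mod_cast hh
  rcases Nat.lt_trichotomy (c + h*B) (h*k') with hlt | hmid | hgt
  · exfalso
    have hBk : B < k' := by
      by_contra hBk
      have h1 : k' ≤ B := by omega
      have h2 : h * k' ≤ h * B := Nat.mul_le_mul_left h h1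
      omega
    have key : ((h:ℤ)*k' - c - h*B) * a = ((F:ℤ) - 3*k') * e := by linear_combination -E
    have hlt' : ((c:ℤ) + h*B) < (h:ℤ)*k' := by exact_mod_cast hlt
    have hpos : (0:ℤ) < ((F:ℤ) - 3*k') * e := by
      rw [← key]
      exact mul_pos (by linarith) ha'
    have := pos_factor _ _ he' hpos
    have hF3 : (3:ℤ)*k' < F := by linarith
    push_cast at hF3
    omega
  · have hmid' : ((c:ℤ) + h*B) = (h:ℤ)*k' := by exact_mod_cast hmid
    have key : ((F:ℤ) - 3*k') * e = 0 := by linear_combination E - a * hmid'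
    have hF : F = 3*k' := by
      rcases mul_eq_zero.mp key with h1 | h1
      · push_cast at h1; omega
      · exfalso; omega
    have hBk : k' ≤ B := by omega
    have hBk2 : B ≤ k' := by
      by_contra hBk2
      have h1 : k' + 1 ≤ B := by omega
      have h2 : h * (k' + 1) ≤ h * B := Nat.mul_le_mul_left h h1
      rw [Nat.mul_add, Nat.mul_one] at h2
      omega
    have hB : B = k' := by omega
    subst hB
    exact ⟨add_eq_right.mp hmid, rfl, hF⟩
  · exfalso
    have hgt' : (h:ℤ)*k' < (c:ℤ) + h*B := by exact_mod_cast hgt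
    have key : ((c:ℤ) + h*B - h*k') * a = ((3:ℤ)*k' - F) * e := by linear_combination E
    have hpos : (0:ℤ) < ((3:ℤ)*k' - F) * e := by
      rw [← key]
      exact mul_pos (by linarith) ha'
    have hy := pos_factor _ _ he' hpos
    exact dvd_contra a e _ _ hcop key (by omega) ha he (by push_cast at hy ⊢; omega)


section Stats

variable [NeZero n]

/-- degree of the `x₀`-free part -/
def Bs (β : Fin n →₀ ℕ) : ℕ := ∑ j ∈ Finset.univ.erase 0, β j

/-- weighted degree of the `x₀`-free part -/
def Fs (β : Fin n →₀ ℕ) : ℕ := ∑ j : Fin n, (j : ℕ) * β j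

lemma Fs_erase (β : Fin n →₀ ℕ) :
    Fs β = ∑ j ∈ Finset.univ.erase (0 : Fin n), (j : ℕ) * β j := by
  rw [Fs, ← Finset.add_sum_erase Finset.univ (fun j : Fin n => (j:ℕ) * β j) (Finset.mem_univ 0)]
  simp

lemma Bs_le_Fs (β : Fin n →₀ ℕ) : Bs β ≤ Fs β := by
  rw [Fs_erase, Bs]
  refine Finset.sum_le_sum ?_
  intro j hj
  have hj0 : j ≠ 0 := (Finset.mem_erase.mp hj).1
  have : 1 ≤ (j:ℕ) := by
    have h1 : (j:ℕ) ≠ 0 := fun h1 => hj0 (Fin.ext (by simp [h1]))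
    omega
  calc β j = 1 * β j := (one_mul _).symm
  _ ≤ (j:ℕ) * β j := Nat.mul_le_mul_right _ this

lemma Fs_le (β : Fin n →₀ ℕ) : Fs β ≤ (n - 1) * Bs β := by
  rw [Fs_erase, Bs, Finset.mul_sum]
  refine Finset.sum_le_sum ?_
  intro j hj
  have : (j:ℕ) ≤ n - 1 := by
    have := j.isLt
    omega
  exact Nat.mul_le_mul_right _ this

lemma Bs_zero (β : Fin n →₀ ℕ) (hB : Bs β = 0) (h0 : β 0 = 0) : β = 0 := by
  ext j
  by_cases hj : j = 0
  · subst hj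
    simpa using h0
  · have := Finset.sum_eq_zero_iff.mp hB j (Finset.mem_erase.mpr ⟨hj, Finset.mem_univ j⟩)
    simpa using this

lemma Bs_pos (γ : Fin n →₀ ℕ) (hγ : γ ≠ 0) (h0 : γ 0 = 0) : 1 ≤ Bs γ := by
  rcases Nat.eq_zero_or_pos (Bs γ) with h1 | h1
  · exact absurd (Bs_zero γ h1 h0) hγ
  · exact h1

lemma W_decomp (d : Fin n → ℕ) (a h e : ℕ) (hd0 : d 0 = a)
    (hdi : ∀ i : Fin n, 0 < (i : ℕ) → d i = h * a + (i : ℕ) * e) (β : Fin n →₀ ℕ) :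
    W d β = (β 0 + h * Bs β) * a + Fs β * e := by
  rw [W, ← Finset.add_sum_erase Finset.univ _ (Finset.mem_univ 0), hd0]
  have hterm : ∀ j ∈ Finset.univ.erase (0 : Fin n),
      β j * d j = (β j) * (h * a) + ((j:ℕ) * β j) * e := by
    intro j hj
    have hj0 : j ≠ 0 := (Finset.mem_erase.mp hj).1
    have hjpos : 0 < (j:ℕ) := by
      have h1 : (j:ℕ) ≠ 0 := fun h1 => hj0 (Fin.ext (by simp [h1]))
      omega
    rw [hdi j hjpos]
    ring
  rw [Finset.sum_congr rfl hterm, Finset.sum_add_distrib, ← Finset.sum_mul, ← Finset.sum_mul,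
    ← Bs, ← Fs_erase]
  ring

end Stats

section Uniq

lemma Fs_zero_of_Bs [NeZero n] (β : Fin n →₀ ℕ) (hB : Bs β = 0) : Fs β = 0 := by
  rw [Fs_erase]
  refine Finset.sum_eq_zero ?_
  intro j hj
  have := Finset.sum_eq_zero_iff.mp hB j hj
  rw [this, mul_zero]

lemma class_uniq (d : Fin n → ℕ) (hpos : ∀ i, 0 < d i) (hmin : MinimallyGenerates d)
    (i : Fin n) (β : Fin n →₀ ℕ) (hβ : W d β = d i) : β = Finsupp.single i 1 := by
  by_cases hβi : β i = 0
  · exfalso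
    exact hmin i ⟨(β : Fin n → ℕ), hβi, hβ.symm⟩
  · set β' := β - Finsupp.single i 1 with hβ'
    have hadd : Finsupp.single i 1 + β' = β := by
      ext j
      rw [hβ']
      by_cases hij : i = j
      · subst hij
        simp only [Finsupp.add_apply, Finsupp.tsub_apply, Finsupp.single_apply,
          eq_self_iff_true, if_true]
        omega
      · simp only [Finsupp.add_apply, Finsupp.tsub_apply, Finsupp.single_apply, if_neg hij]
        omega
    have h2 : d i + W d β' = d i := by
      conv_rhs => rw [← hβ, ← hadd]
      rw [W_add, W_single, one_mul]
    have h3 : W d β' = 0 := by omega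
    rw [W_eq_zero d hpos β' h3, add_zero] at hadd
    exact hadd.symm

lemma valid_single_pow (d : Fin n → ℕ) (i : Fin n) (c : ℕ) (hc : 1 ≤ c)
    (huniq : ∀ k', k' < c → ∀ β, W d β = k' * d i → β = Finsupp.single i k') :
    Valid d (fun α => α = Finsupp.single i c) (c * d i) := by
  constructor
  · rintro α rfl
    exact W_single d i c
  · intro γ hγ
    by_cases hex : ∃ j, 1 ≤ j ∧ j ≤ c ∧ γ = Finsupp.single i j
    · obtain ⟨j, hj1, hjc, rfl⟩ := hex
      left
      intro β hwβ
      rw [W_single] at hwβ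
      have hsplit : (c - j) * d i + j * d i = c * d i := by
        rw [← Nat.add_mul, Nat.sub_add_cancel hjc]
      have hβw : W d β = (c - j) * d i := by linarith
      rw [huniq (c - j) (by omega) β hβw, ← Finsupp.single_add]
      have : j + (c - j) = c := by omega
      rw [this]
    · right
      intro β hP
      apply hex
      have hco : ∀ l, γ l + β l = Finsupp.single i c l := by
        intro l
        rw [← Finsupp.add_apply, hP]
      refine ⟨γ i, ?_, ?_, ?_⟩
      · -- 1 ≤ γ i
        by_contra hγi
        apply hγ
        ext l
        by_cases hl : l = i
        · subst hl; simp only [Finsupp.coe_zero, Pi.zero_apply]; omega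
        · have := hco l
          rw [Finsupp.single_apply, if_neg (fun h => hl h.symm)] at this
          simp only [Finsupp.coe_zero, Pi.zero_apply]
          omega
      · have := hco i
        rw [Finsupp.single_apply, if_pos rfl] at this
        omega
      · ext l
        by_cases hl : l = i
        · subst hl; simp [Finsupp.single_apply]
        · have := hco l
          rw [Finsupp.single_apply, if_neg (fun h => hl h.symm)] at this
          rw [Finsupp.single_apply, if_neg (fun h => hl h.symm)]
          omega

lemma valid_pair (d : Fin n → ℕ) (hpos : ∀ i, 0 < d i) (hmin : MinimallyGenerates d)
    (i j : Fin n) (hij : i ≠ j) :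
    Valid d (fun α => α = Finsupp.single i 1 + Finsupp.single j 1) (d i + d j) := by
  constructor
  · rintro α rfl
    rw [W_add, W_single, W_single, one_mul, one_mul]
  · intro γ hγ
    by_cases h1 : γ = Finsupp.single i 1
    · left
      intro β hwβ
      subst h1
      rw [W_single, one_mul] at hwβ
      have hβw : W d β = d j := by omega
      rw [class_uniq d hpos hmin j β hβw]
    · by_cases h2 : γ = Finsupp.single j 1
      · left
        intro β hwβ
        subst h2
        rw [W_single, one_mul] at hwβ
        have hβw : W d β = d i := by omega
        rw [class_uniq d hpos hmin i β hβw, add_comm]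
      · by_cases h3 : γ = Finsupp.single i 1 + Finsupp.single j 1
        · left
          intro β hwβ
          subst h3
          rw [W_add, W_single, W_single, one_mul, one_mul] at hwβ
          have hβw : W d β = 0 := by omega
          rw [W_eq_zero d hpos β hβw, add_zero]
        · right
          intro β hP
          have hco : ∀ l, γ l + β l = Finsupp.single i 1 l + Finsupp.single j 1 l := by
            intro l
            have h5 := DFunLike.congr_fun hP l
            simpa only [Finsupp.add_apply] using h5
          have hγother : ∀ l, l ≠ i → l ≠ j → γ l = 0 := by
            intro l hli hlj
            have := hco l
            rw [Finsupp.single_apply, Finsupp.single_apply,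
              if_neg (fun h => hli h.symm), if_neg (fun h => hlj h.symm)] at this
            omega
          have hγi : γ i ≤ 1 := by
            have := hco i
            rw [Finsupp.single_apply, Finsupp.single_apply,
              if_pos rfl, if_neg (fun h => hij h.symm)] at this
            omega
          have hγj : γ j ≤ 1 := by
            have := hco j
            rw [Finsupp.single_apply, Finsupp.single_apply,
              if_neg hij, if_pos rfl] at this
            omega
          have hform : γ = Finsupp.single i (γ i) + Finsupp.single j (γ j) := by
            ext l
            rw [Finsupp.add_apply, Finsupp.single_apply, Finsupp.single_apply]
            by_cases hli : l = i
            · subst hli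
              rw [if_pos rfl, if_neg (fun h => hij h.symm)]
              omega
            · by_cases hlj : l = j
              · subst hlj
                rw [if_neg (fun h => hij h), if_pos rfl]
                omega
              · rw [if_neg (fun h => hli h.symm), if_neg (fun h => hlj h.symm)]
                rw [hγother l hli hlj]
                omega
          have hγi' : γ i = 0 ∨ γ i = 1 := by omega
          have hγj' : γ j = 0 ∨ γ j = 1 := by omega
          rcases hγi' with hgi | hgi <;> rcases hγj' with hgj | hgj <;>
            rw [hgi, hgj] at hform
          · exact hγ (by simpa using hform)
          · exact h2 (by simpa using hform)
          · exact h1 (by simpa using hform)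
          · exact h3 hform

end Uniq

section ValidA

lemma validA [NeZero n] (d : Fin n → ℕ) (a h e m : ℕ) (hd0 : d 0 = a)
    (hdi : ∀ i : Fin n, 0 < (i : ℕ) → d i = h * a + (i : ℕ) * e)
    (hh : 1 ≤ h) (he : 1 ≤ e) (hcop : Nat.Coprime a e) (hna : n ≤ a)
    (hm1 : 1 ≤ m) (hma : m < a) :
    Valid d (fun α => W d α = 2*h*a + m*e ∧ α 0 ≠ 0) (2*h*a + m*e) := by
  have hn1 : 1 ≤ n := Nat.pos_of_ne_zero (NeZero.ne n)
  have ha1 : 1 ≤ a := by omega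
  constructor
  · exact fun α hα => hα.1
  · intro γ hγ
    by_cases hγ0 : γ 0 = 0
    · by_cases hfree : ∃ β₀ : Fin n →₀ ℕ, W d γ + W d β₀ = 2*h*a + m*e ∧ β₀ 0 = 0
      · right
        rintro β ⟨hwβ, hβ0⟩
        obtain ⟨β₀, hwβ₀, hβ₀0⟩ := hfree
        have hβadd : (γ + β) 0 = γ 0 + β 0 := rfl
        have hβ0' : 1 ≤ β 0 := by omega
        have hEA : Fs γ + Bs γ ≤ a * Bs γ := by
          have hf := Fs_le γ
          have h2 : n * Bs γ ≤ a * Bs γ := Nat.mul_le_mul_right _ hna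
          have h3 : (n-1) * Bs γ + 1 * Bs γ = ((n-1)+1) * Bs γ := (Nat.add_mul _ _ _).symm
          have h4 : (n-1) + 1 = n := by omega
          rw [h4] at h3
          omega
        have eq1 : h*(Bs γ)*a + (Fs γ)*e + (h*(Bs β₀)*a + (Fs β₀)*e) = 2*h*a + m*e := by
          rw [W_decomp d a h e hd0 hdi γ, W_decomp d a h e hd0 hdi β₀, hγ0, hβ₀0] at hwβ₀
          linarith [hwβ₀]
        have eq2 : ((β 0) + h*(Bs β))*a + (Fs β)*e + (h*(Bs γ)*a + (Fs γ)*e)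
            = 2*h*a + m*e := by
          rw [W_add] at hwβ
          rw [W_decomp d a h e hd0 hdi γ, W_decomp d a h e hd0 hdi β, hγ0] at hwβ
          linarith [hwβ]
        exact arith1 a e h m (Bs γ) (Fs γ) (Bs β₀) (Fs β₀) (β 0) (Bs β) (Fs β)
          hcop hh he ha1 hm1 hma (Bs_pos γ hγ hγ0) (Bs_le_Fs γ) hEA (Bs_le_Fs β₀)
          (fun hB => Fs_zero_of_Bs β₀ hB) hβ0' (fun hB => Fs_zero_of_Bs β hB) eq1 eq2
      · left
        intro β hwβ
        refine ⟨by rw [W_add]; exact hwβ, ?_⟩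
        intro h0
        have hβadd : (γ + β) 0 = γ 0 + β 0 := rfl
        exact hfree ⟨β, hwβ, by omega⟩
    · left
      intro β hwβ
      refine ⟨by rw [W_add]; exact hwβ, ?_⟩
      have hβadd : (γ + β) 0 = γ 0 + β 0 := rfl
      omega

end ValidA

section Binom

lemma binom_mem (d : Fin n → ℕ) (α β : Fin n →₀ ℕ) (h : W d α = W d β) :
    (monomial α (1:k) - monomial β 1) ∈ toricIdeal k d := by
  rw [mem_toricIdeal_iff, map_sub, aeval_monomial, aeval_monomial, prod_pow_eq, prod_pow_eq,
    h, sub_self]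

lemma phi_binom (P : (Fin n →₀ ℕ) → Prop) (α β : Fin n →₀ ℕ) :
    phi P (monomial α (1:k) - monomial β 1)
      = (if P α then (1:k) else 0) - (if P β then 1 else 0) := by
  rw [phi_sub, phi_monomial, phi_monomial]

lemma ne_of_coord {α β : Fin n →₀ ℕ} (l : Fin n) (h : α l ≠ β l) : α ≠ β :=
  fun he => h (by rw [he])

lemma coord2 (u v w : Fin n) (c c' : ℕ) :
    (Finsupp.single u c + Finsupp.single v c') w
      = (if u = w then c else 0) + (if v = w then c' else 0) := by
  rw [Finsupp.add_apply, Finsupp.single_apply, Finsupp.single_apply]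

end Binom

section Monos

variable [NeZero n]

/-- the exponent vector `x₀^h x_u` -/
noncomputable def mA (h : ℕ) (u : Fin n) : Fin n →₀ ℕ := Finsupp.single 0 h + Finsupp.single u 1

/-- the exponent vector `x_u x_v` -/
noncomputable def mP (u v : Fin n) : Fin n →₀ ℕ := Finsupp.single u 1 + Finsupp.single v 1

lemma mA_coord0 (h : ℕ) (u : Fin n) (hu : u ≠ 0) : mA h u 0 = h := by
  rw [mA, coord2, if_pos rfl, if_neg hu, add_zero]

lemma mP_coord (u v w : Fin n) :
    mP u v w = (if u = w then 1 else 0) + (if v = w then 1 else 0) := by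
  rw [mP, coord2]

lemma mP_coord0 (u v : Fin n) (hu : u ≠ 0) (hv : v ≠ 0) : mP u v 0 = 0 := by
  rw [mP_coord, if_neg hu, if_neg hv, add_zero]

lemma W_mA (d : Fin n → ℕ) (h : ℕ) (u : Fin n) : W d (mA h u) = h * d 0 + d u := by
  rw [mA, W_add, W_single, W_single, one_mul]

lemma W_mP (d : Fin n → ℕ) (u v : Fin n) : W d (mP u v) = d u + d v := by
  rw [mP, W_add, W_single, W_single, one_mul, one_mul]

lemma single_coord0 (u : Fin n) (c : ℕ) (hu : u ≠ 0) : Finsupp.single u c 0 = 0 := by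
  rw [Finsupp.single_apply, if_neg hu]

end Monos

section Main5

lemma main5 [NeZero n] (d : Fin n → ℕ) (a h e : ℕ) (hn5 : 5 ≤ n)
    (hd0 : d 0 = a) (hdi : ∀ i : Fin n, 0 < (i : ℕ) → d i = h * a + (i : ℕ) * e)
    (hh : 1 ≤ h) (he : 1 ≤ e) (hpos : ∀ i, 0 < d i) (hmin : MinimallyGenerates d)
    (hcop : Nat.Coprime a e) (hna : n ≤ a) (hCI : IsCI k d) : False := by
  have hnpos : 0 < n := by omega
  set idx : ℕ → Fin n := fun m => ⟨m % n, Nat.mod_lt _ hnpos⟩ with hidxdef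
  have hidxv : ∀ m, m < n → ((idx m : Fin n) : ℕ) = m := fun m hm => Nat.mod_eq_of_lt hm
  have hidxne : ∀ m m' : ℕ, m < n → m' < n → m ≠ m' → idx m ≠ idx m' := by
    intro m m' hm hm' hne heq
    apply hne
    have h2 : m % n = m' % n := congrArg Fin.val heq
    rwa [Nat.mod_eq_of_lt hm, Nat.mod_eq_of_lt hm'] at h2
  have hidxn0 : ∀ m, 1 ≤ m → m < n → idx m ≠ 0 := by
    intro m h1 hm heq
    have h2 : m % n = ((0 : Fin n) : ℕ) := congrArg Fin.val heq
    rw [Fin.val_zero, Nat.mod_eq_of_lt hm] at h2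
    omega
  have hdm : ∀ m, 1 ≤ m → m < n → d (idx m) = h * a + m * e := by
    intro m h1 hm
    have h2 := hdi (idx m) (by rw [hidxv m hm]; omega)
    rwa [hidxv m hm] at h2
  have hWmA : ∀ m, 1 ≤ m → m < n → W d (mA h (idx m)) = 2*h*a + m*e := by
    intro m h1 hm
    rw [W_mA, hd0, hdm m h1 hm]
    ring
  have hWmB : ∀ m, 2 ≤ m → m < n → W d (mP (idx 1) (idx (m-1))) = 2*h*a + m*e := by
    intro m h2 hm
    rw [W_mP, hdm 1 (by omega) (by omega), hdm (m-1) (by omega) (by omega)]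
    have h3 : 1*e + (m-1)*e = (1+(m-1))*e := (Nat.add_mul _ _ _).symm
    have h4 : 1 + (m-1) = m := by omega
    rw [h4] at h3
    linarith
  have hPA_mP : ∀ (u v : Fin n) (s0 : ℕ), u ≠ 0 → v ≠ 0 →
      ¬ (W d (mP u v) = s0 ∧ mP u v 0 ≠ 0) := by
    intro u v s0 hu hv hP
    exact hP.2 (mP_coord0 u v hu hv)
  have hPA_single : ∀ (u : Fin n) (c s0 : ℕ), u ≠ 0 →
      ¬ (W d (Finsupp.single u c) = s0 ∧ Finsupp.single u c 0 ≠ 0) := by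
    intro u c s0 hu hP
    exact hP.2 (single_coord0 u c hu)
  -- coordinate non-equalities
  have ne21 : idx 2 ≠ idx 1 := hidxne 2 1 (by omega) (by omega) (by omega)
  have ne31 : idx 3 ≠ idx 1 := hidxne 3 1 (by omega) (by omega) (by omega)
  have ne23 : idx 2 ≠ idx 3 := hidxne 2 3 (by omega) (by omega) (by omega)
  have hmA_ne_single : ∀ m, 1 ≤ m → m < n → mA h (idx m) ≠ Finsupp.single (idx 2) 2 := by
    intro m h1 hm
    refine ne_of_coord 0 ?_
    rw [mA_coord0 h _ (hidxn0 m h1 hm), single_coord0 _ _ (hidxn0 2 (by omega) (by omega))]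
    omega
  have hmA_ne_mP : ∀ m, 1 ≤ m → m < n → mA h (idx m) ≠ mP (idx 2) (idx 3) := by
    intro m h1 hm
    refine ne_of_coord 0 ?_
    rw [mA_coord0 h _ (hidxn0 m h1 hm),
      mP_coord0 _ _ (hidxn0 2 (by omega) (by omega)) (hidxn0 3 (by omega) (by omega))]
    omega
  have hmB_ne_single : ∀ v : Fin n, mP (idx 1) v ≠ Finsupp.single (idx 2) 2 := by
    intro v
    refine ne_of_coord (idx 1) ?_
    rw [mP_coord, if_pos rfl, Finsupp.single_apply, if_neg ne21]
    omega
  have hmB_ne_mP : ∀ v : Fin n, mP (idx 1) v ≠ mP (idx 2) (idx 3) := by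
    intro v
    refine ne_of_coord (idx 1) ?_
    rw [mP_coord, if_pos rfl, mP_coord, if_neg ne21, if_neg ne31]
    omega
  have hsingle_ne_mP : Finsupp.single (idx 2) 2 ≠ mP (idx 2) (idx 3) := by
    refine ne_of_coord (idx 3) ?_
    rw [Finsupp.single_apply, if_neg ne23, mP_coord, if_neg ne23, if_pos rfl]
    omega
  refine contra d (by omega) hCI
    (fun t => if (t : ℕ) < n - 2 then
        (fun α => W d α = 2*h*a + ((t : ℕ)+2)*e ∧ α 0 ≠ 0)
      else if (t : ℕ) = n - 2 then (fun α => α = Finsupp.single (idx 2) 2)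
      else (fun α => α = mP (idx 2) (idx 3)))
    (fun t => if (t : ℕ) < n - 2 then 2*h*a + ((t : ℕ)+2)*e
      else if (t : ℕ) = n - 2 then 2 * d (idx 2) else d (idx 2) + d (idx 3))
    ?_
    (fun t => if (t : ℕ) < n - 2 then
        monomial (mA h (idx ((t : ℕ)+2))) 1 - monomial (mP (idx 1) (idx ((t : ℕ)+1))) 1
      else if (t : ℕ) = n - 2 then
        monomial (Finsupp.single (idx 2) 2) 1 - monomial (mP (idx 1) (idx 3)) 1
      else monomial (mP (idx 2) (idx 3)) 1 - monomial (mP (idx 1) (idx 4)) 1)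
    ?_ ?_
  · -- validity
    intro t
    split_ifs with h1 h2
    · exact validA d a h e ((t : ℕ)+2) hd0 hdi hh he hcop hna (by omega) (by omega)
    · refine valid_single_pow d (idx 2) 2 (by omega) ?_
      intro k' hk' β hβ
      interval_cases k'
      · rw [zero_mul] at hβ
        rw [Finsupp.single_zero]
        exact W_eq_zero d hpos β hβ
      · rw [one_mul] at hβ
        exact class_uniq d hpos hmin _ β hβ
    · exact valid_pair d hpos hmin (idx 2) (idx 3) ne23
  · -- membership
    intro t
    split_ifs with h1 h2
    · refine binom_mem d _ _ ?_
      rw [hWmA ((t : ℕ)+2) (by omega) (by omega)]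
      have h5 := hWmB ((t : ℕ)+2) (by omega) (by omega)
      have h6 : (t : ℕ) + 2 - 1 = (t : ℕ) + 1 := by omega
      rw [h6] at h5
      rw [h5]
    · refine binom_mem d _ _ ?_
      rw [W_single, W_mP, hdm 2 (by omega) (by omega), hdm 1 (by omega) (by omega),
        hdm 3 (by omega) (by omega)]
      ring
    · refine binom_mem d _ _ ?_
      rw [W_mP, W_mP, hdm 2 (by omega) (by omega), hdm 3 (by omega) (by omega),
        hdm 1 (by omega) (by omega), hdm 4 (by omega) (by omega)]
      ring
  · -- delta matrix
    intro t t'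
    by_cases ht1 : (t : ℕ) < n - 2
    · rw [if_pos ht1]
      by_cases ht1' : (t' : ℕ) < n - 2
      · rw [if_pos ht1', phi_binom,
          if_neg (hPA_mP (idx 1) (idx ((t' : ℕ)+1)) _ (hidxn0 1 (by omega) (by omega))
            (hidxn0 ((t' : ℕ)+1) (by omega) (by omega)))]
        by_cases hteq : t = t'
        · subst hteq
          rw [if_pos ⟨hWmA ((t : ℕ)+2) (by omega) (by omega), by
              rw [mA_coord0 h _ (hidxn0 ((t : ℕ)+2) (by omega) (by omega))]; omega⟩,
            if_pos rfl]
          ring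
        · rw [if_neg ?_, if_neg hteq]
          · ring
          · rintro ⟨hw, -⟩
            rw [hWmA ((t' : ℕ)+2) (by omega) (by omega)] at hw
            have h7 : ((t' : ℕ)+2)*e = ((t : ℕ)+2)*e := by omega
            have h8 := Nat.eq_of_mul_eq_mul_right (by omega : 0 < e) h7
            exact hteq (Fin.ext (by omega))
      · have htne : t ≠ t' := by
          intro he'
          rw [he'] at ht1
          exact ht1' ht1
        rw [if_neg ht1']
        by_cases ht2' : (t' : ℕ) = n - 2
        · rw [if_pos ht2', phi_binom,
            if_neg (hPA_single (idx 2) 2 _ (hidxn0 2 (by omega) (by omega))),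
            if_neg (hPA_mP (idx 1) (idx 3) _ (hidxn0 1 (by omega) (by omega))
              (hidxn0 3 (by omega) (by omega))),
            if_neg htne]
          ring
        · rw [if_neg ht2', phi_binom,
            if_neg (hPA_mP (idx 2) (idx 3) _ (hidxn0 2 (by omega) (by omega))
              (hidxn0 3 (by omega) (by omega))),
            if_neg (hPA_mP (idx 1) (idx 4) _ (hidxn0 1 (by omega) (by omega))
              (hidxn0 4 (by omega) (by omega))),
            if_neg htne]
          ring
    · rw [if_neg ht1]
      by_cases ht2 : (t : ℕ) = n - 2
      · rw [if_pos ht2]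
        by_cases ht1' : (t' : ℕ) < n - 2
        · have htne : t ≠ t' := by
            intro he'
            rw [he'] at ht2
            omega
          rw [if_pos ht1', phi_binom,
            if_neg (hmA_ne_single ((t' : ℕ)+2) (by omega) (by omega)),
            if_neg (hmB_ne_single (idx ((t' : ℕ)+1))), if_neg htne]
          ring
        · by_cases ht2' : (t' : ℕ) = n - 2
          · have hteq : t = t' := Fin.ext (by omega)
            rw [if_neg ht1', if_pos ht2', phi_binom, if_pos rfl,
              if_neg (hmB_ne_single (idx 3)), if_pos hteq]
            ring
          · have htne : t ≠ t' := by
              intro he'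
              rw [he'] at ht2
              exact ht2' ht2
            rw [if_neg ht1', if_neg ht2', phi_binom,
              if_neg hsingle_ne_mP.symm, if_neg (hmB_ne_single (idx 4)), if_neg htne]
            ring
      · rw [if_neg ht2]
        by_cases ht1' : (t' : ℕ) < n - 2
        · have htne : t ≠ t' := by
            intro he'
            rw [he'] at ht1
            exact ht1 ht1'
          rw [if_pos ht1', phi_binom,
            if_neg (hmA_ne_mP ((t' : ℕ)+2) (by omega) (by omega)),
            if_neg (hmB_ne_mP (idx ((t' : ℕ)+1))), if_neg htne]
          ring
        · by_cases ht2' : (t' : ℕ) = n - 2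
          · have htne : t ≠ t' := by
              intro he'
              rw [he'] at ht2
              exact ht2 ht2'
            rw [if_neg ht1', if_pos ht2', phi_binom,
              if_neg hsingle_ne_mP, if_neg (hmB_ne_mP (idx 3)), if_neg htne]
            ring
          · have hteq : t = t' := Fin.ext (by omega)
            rw [if_neg ht1', if_neg ht2', phi_binom, if_pos rfl,
              if_neg (hmB_ne_mP (idx 4)), if_pos hteq]
            ring

end Main5

section Main4

set_option maxHeartbeats 1000000 in
lemma main4 (d : Fin 4 → ℕ) (a h e : ℕ)
    (hd0 : d 0 = a) (hdi : ∀ i : Fin 4, 0 < (i : ℕ) → d i = h * a + (i : ℕ) * e)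
    (hh : 1 ≤ h) (he : 1 ≤ e) (hpos : ∀ i, 0 < d i) (hmin : MinimallyGenerates d)
    (hcop : Nat.Coprime a e) (hna : 4 ≤ a) (hCI : IsCI k d) : False := by
  have hd1 : d 1 = h*a + 1*e := by
    have h5 := hdi 1 (by decide)
    rwa [show ((1 : Fin 4) : ℕ) = 1 from rfl] at h5
  have hd2 : d 2 = h*a + 2*e := by
    have h5 := hdi 2 (by decide)
    rwa [show ((2 : Fin 4) : ℕ) = 2 from rfl] at h5
  have hd3 : d 3 = h*a + 3*e := by
    have h5 := hdi 3 (by decide)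
    rwa [show ((3 : Fin 4) : ℕ) = 3 from rfl] at h5
  set k₀ : ℕ := (a + 2) / 3 with hk₀def
  have hk₀1 : 3 * k₀ ≤ a + 2 := by omega
  have hk₀2 : a ≤ 3 * k₀ := by omega
  have hk2 : 2 ≤ k₀ := by omega
  have class3 : ∀ k', 3*k' < a → ∀ β : Fin 4 →₀ ℕ, W d β = k' * d 3 →
      β = Finsupp.single 3 k' := by
    intro k' h3k β hβ
    rw [W_decomp d a h e hd0 hdi β, hd3] at hβ
    have hrr : k' * (h*a + 3*e) = h*k'*a + 3*k'*e := by ring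
    rw [hrr] at hβ
    have hf3 : Fs β ≤ 3 * Bs β := by
      have h5 := Fs_le β
      rwa [show (4:ℕ) - 1 = 3 from rfl] at h5
    obtain ⟨hc, hB, hF⟩ := arith2 a e h k' (β 0) (Bs β) (Fs β) hcop hh he (by omega)
      h3k hf3 (Bs_le_Fs β) hβ
    have h5 : ∑ j : Fin 4, β j = β 0 + β 1 + β 2 + β 3 := Fin.sum_univ_four (fun j => β j)
    have h6 : β 0 + Bs β = ∑ j : Fin 4, β j := by
      rw [Bs]
      exact Finset.add_sum_erase _ (fun j => β j) (Finset.mem_univ 0)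
    have h7 := Fin.sum_univ_four (fun j : Fin 4 => (j:ℕ) * β j)
    rw [show ((0:Fin 4):ℕ) = 0 from rfl, show ((1:Fin 4):ℕ) = 1 from rfl,
      show ((2:Fin 4):ℕ) = 2 from rfl, show ((3:Fin 4):ℕ) = 3 from rfl] at h7
    have h8 : Fs β = 0 * β 0 + 1 * β 1 + 2 * β 2 + 3 * β 3 := h7
    have hβ1 : β 1 = 0 := by omega
    have hβ2 : β 2 = 0 := by omega
    have hβ3 : β 3 = k' := by omega
    ext j
    fin_cases j
    · show β 0 = Finsupp.single (3 : Fin 4) k' 0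
      rw [Finsupp.single_apply, if_neg (by decide)]
      omega
    · show β 1 = Finsupp.single (3 : Fin 4) k' 1
      rw [Finsupp.single_apply, if_neg (by decide)]
      omega
    · show β 2 = Finsupp.single (3 : Fin 4) k' 2
      rw [Finsupp.single_apply, if_neg (by decide)]
      omega
    · show β 3 = Finsupp.single (3 : Fin 4) k' 3
      rw [Finsupp.single_apply, if_pos (by decide)]
      omega
  set pt : Fin 4 →₀ ℕ :=
    if 3*k₀ - a = 0 then Finsupp.single 0 (h*k₀ + e)
    else Finsupp.single 0 (h*(k₀-1) + e) + Finsupp.single (⟨3*k₀ - a, by omega⟩ : Fin 4) 1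
    with hptdef
  have hWp : W d pt = k₀ * d 3 := by
    rw [hptdef]
    by_cases hv : 3*k₀ - a = 0
    · rw [if_pos hv, W_single, hd0, hd3]
      have ha3 : a = 3 * k₀ := by omega
      rw [ha3]
      ring
    · rw [if_neg hv, W_add, W_single, W_single, hd0, hd3]
      have hvd := hdi (⟨3*k₀ - a, by omega⟩ : Fin 4) (by show 0 < 3*k₀ - a; omega)
      rw [hvd]
      have hval' : ((⟨3*k₀ - a, by omega⟩ : Fin 4) : ℕ) = 3*k₀ - a := rfl
      rw [hval']
      obtain ⟨K, hK⟩ : ∃ K, k₀ = K + 1 := ⟨k₀ - 1, by omega⟩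
      rw [hK]
      have hsub : K + 1 - 1 = K := by omega
      rw [hsub]
      have hav : a + (3*(K+1) - a) = 3*(K+1) := by omega
      have h9 : e * (a + (3*(K+1) - a)) = e * (3*(K+1)) := by rw [hav]
      linarith [h9]
  have hpt0 : pt 0 ≠ 0 := by
    rw [hptdef]
    by_cases hv : 3*k₀ - a = 0
    · rw [if_pos hv, Finsupp.single_apply, if_pos rfl]
      omega
    · rw [if_neg hv, coord2, if_pos rfl,
        if_neg (Fin.ne_of_val_ne (by show 3*k₀ - a ≠ 0; omega) :
          (⟨3*k₀ - a, by omega⟩ : Fin 4) ≠ 0)]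
      omega
  have hWpne : ∀ m, m ≤ 3 → W d pt ≠ 2*h*a + m*e := by
    intro m hm3 hww
    rw [hWp, hd3] at hww
    have h1 : 2*(h*a+3*e) ≤ k₀*(h*a+3*e) := Nat.mul_le_mul_right _ hk2
    have h2 : m*e ≤ 3*e := Nat.mul_le_mul_right e hm3
    linarith [h1, h2, he]
  have hWA2 : W d (mA h 2) = 2*h*a + 2*e := by rw [W_mA, hd0, hd2]; ring
  have hWA3 : W d (mA h 3) = 2*h*a + 3*e := by rw [W_mA, hd0, hd3]; ring
  have hWB2 : W d (mP 1 1) = 2*h*a + 2*e := by rw [W_mP, hd1]; ring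
  have hWB3 : W d (mP 1 2) = 2*h*a + 3*e := by rw [W_mP, hd1, hd2]; ring
  have hPA_mP : ∀ (u v : Fin 4) (s0 : ℕ), u ≠ 0 → v ≠ 0 →
      ¬ (W d (mP u v) = s0 ∧ mP u v 0 ≠ 0) :=
    fun u v s0 hu hv hP => hP.2 (mP_coord0 u v hu hv)
  have hPA_single : ∀ (u : Fin 4) (c s0 : ℕ), u ≠ 0 →
      ¬ (W d (Finsupp.single u c) = s0 ∧ Finsupp.single u c 0 ≠ 0) :=
    fun u c s0 hu hP => hP.2 (single_coord0 u c hu)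
  have hne_mA_q : ∀ m : Fin 4, m ≠ 0 → mA h m ≠ Finsupp.single 2 2 := by
    intro m hm
    refine ne_of_coord 0 ?_
    rw [mA_coord0 h m hm, single_coord0 _ _ (by decide)]
    omega
  have hne_mA_F : ∀ m : Fin 4, m ≠ 0 → mA h m ≠ Finsupp.single 3 k₀ := by
    intro m hm
    refine ne_of_coord 0 ?_
    rw [mA_coord0 h m hm, single_coord0 _ _ (by decide)]
    omega
  have hne_mP_q : ∀ v : Fin 4, mP 1 v ≠ Finsupp.single 2 2 := by
    intro v
    refine ne_of_coord 1 ?_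
    rw [mP_coord, if_pos rfl, Finsupp.single_apply,
      if_neg (show ¬ (2:Fin 4) = 1 by decide)]
    exact Nat.pos_iff_ne_zero.mp (Nat.lt_of_lt_of_le Nat.zero_lt_one (Nat.le_add_right 1 _))
  have hne_mP_F : ∀ v : Fin 4, mP 1 v ≠ Finsupp.single 3 k₀ := by
    intro v
    refine ne_of_coord 1 ?_
    rw [mP_coord, if_pos rfl, Finsupp.single_apply,
      if_neg (show ¬ (3:Fin 4) = 1 by decide)]
    exact Nat.pos_iff_ne_zero.mp (Nat.lt_of_lt_of_le Nat.zero_lt_one (Nat.le_add_right 1 _))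
  have hne_q_F : Finsupp.single (2 : Fin 4) 2 ≠ Finsupp.single 3 k₀ := by
    refine ne_of_coord 2 ?_
    rw [Finsupp.single_apply, if_pos rfl, Finsupp.single_apply, if_neg (by decide)]
    omega
  have hne_F_q : Finsupp.single (3 : Fin 4) k₀ ≠ Finsupp.single 2 2 := by
    refine ne_of_coord 3 ?_
    rw [Finsupp.single_apply, if_pos rfl, Finsupp.single_apply, if_neg (by decide)]
    omega
  have hne_pt_q : pt ≠ Finsupp.single 2 2 := by
    refine ne_of_coord 0 ?_
    rw [single_coord0 _ _ (by decide)]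
    exact hpt0
  have hne_pt_F : pt ≠ Finsupp.single 3 k₀ := by
    refine ne_of_coord 0 ?_
    rw [single_coord0 _ _ (by decide)]
    exact hpt0
  have hposA2 : W d (mA h 2) = 2*h*a + 2*e ∧ mA (n := 4) h 2 0 ≠ 0 :=
    ⟨hWA2, by rw [mA_coord0 (n := 4) h 2 (by decide)]; omega⟩
  have hposA3 : W d (mA h 3) = 2*h*a + 3*e ∧ mA (n := 4) h 3 0 ≠ 0 :=
    ⟨hWA3, by rw [mA_coord0 (n := 4) h 3 (by decide)]; omega⟩
  have hx01 : ¬ (W d (mA h 3) = 2*h*a + 2*e ∧ mA (n := 4) h 3 0 ≠ 0) := by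
    rintro ⟨hw, -⟩
    rw [hWA3] at hw
    linarith
  have hx10 : ¬ (W d (mA h 2) = 2*h*a + 3*e ∧ mA (n := 4) h 2 0 ≠ 0) := by
    rintro ⟨hw, -⟩
    rw [hWA2] at hw
    linarith
  have hxp2 : ¬ (W d pt = 2*h*a + 2*e ∧ pt 0 ≠ 0) := fun hP => hWpne 2 (by omega) hP.1
  have hxp3 : ¬ (W d pt = 2*h*a + 3*e ∧ pt 0 ≠ 0) := fun hP => hWpne 3 (by omega) hP.1
  refine contra d (by omega) hCI
    (fun t => if (t : ℕ) = 0 then (fun α => W d α = 2*h*a + 2*e ∧ α 0 ≠ 0)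
      else if (t : ℕ) = 1 then (fun α => W d α = 2*h*a + 3*e ∧ α 0 ≠ 0)
      else if (t : ℕ) = 2 then (fun α => α = Finsupp.single 2 2)
      else (fun α => α = Finsupp.single 3 k₀))
    (fun t => if (t : ℕ) = 0 then 2*h*a + 2*e
      else if (t : ℕ) = 1 then 2*h*a + 3*e
      else if (t : ℕ) = 2 then 2 * d 2 else k₀ * d 3)
    ?_
    (fun t => if (t : ℕ) = 0 then monomial (mA h 2) 1 - monomial (mP 1 1) 1
      else if (t : ℕ) = 1 then monomial (mA h 3) 1 - monomial (mP 1 2) 1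
      else if (t : ℕ) = 2 then monomial (Finsupp.single 2 2) 1 - monomial (mP 1 3) 1
      else monomial (Finsupp.single 3 k₀) 1 - monomial pt 1)
    ?_ ?_
  · -- validity
    intro t
    split_ifs with h1 h2 h3
    · exact validA d a h e 2 hd0 hdi hh he hcop hna (by omega) (by omega)
    · exact validA d a h e 3 hd0 hdi hh he hcop hna (by omega) (by omega)
    · refine valid_single_pow d 2 2 (by omega) ?_
      intro k' hk' β hβ
      interval_cases k'
      · rw [zero_mul] at hβ
        rw [Finsupp.single_zero]
        exact W_eq_zero d hpos β hβ
      · rw [one_mul] at hβ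
        exact class_uniq d hpos hmin _ β hβ
    · exact valid_single_pow d 3 k₀ (by omega)
        (fun k' hk' β hβ => class3 k' (by omega) β hβ)
  · -- membership
    intro t
    split_ifs with h1 h2 h3
    · exact binom_mem d _ _ (hWA2.trans hWB2.symm)
    · exact binom_mem d _ _ (hWA3.trans hWB3.symm)
    · refine binom_mem d _ _ ?_
      rw [W_single, W_mP, hd1, hd2, hd3]
      ring
    · refine binom_mem d _ _ ?_
      rw [W_single, hWp]
  · -- delta
    intro t t'
    fin_cases t <;> fin_cases t'
    · rw [if_pos (by decide),
        if_pos (by decide),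
        phi_binom,
        if_pos hposA2,
        if_neg (hPA_mP 1 1 _ (by decide) (by decide)),
        if_pos rfl]
      ring
    · rw [if_pos (by decide),
        if_neg (by decide),
        if_pos (by decide),
        phi_binom,
        if_neg hx01,
        if_neg (hPA_mP 1 2 _ (by decide) (by decide)),
        if_neg (by decide)]
      ring
    · rw [if_pos (by decide),
        if_neg (by decide),
        if_neg (by decide),
        if_pos (by decide),
        phi_binom,
        if_neg (hPA_single 2 2 _ (by decide)),
        if_neg (hPA_mP 1 3 _ (by decide) (by decide)),
        if_neg (by decide)]
      ring
    · rw [if_pos (by decide),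
        if_neg (by decide),
        if_neg (by decide),
        if_neg (by decide),
        phi_binom,
        if_neg (hPA_single 3 k₀ _ (by decide)),
        if_neg hxp2,
        if_neg (by decide)]
      ring
    · rw [if_neg (by decide),
        if_pos (by decide),
        if_pos (by decide),
        phi_binom,
        if_neg hx10,
        if_neg (hPA_mP 1 1 _ (by decide) (by decide)),
        if_neg (by decide)]
      ring
    · rw [if_neg (by decide),
        if_pos (by decide),
        if_neg (by decide),
        if_pos (by decide),
        phi_binom,
        if_pos hposA3,
        if_neg (hPA_mP 1 2 _ (by decide) (by decide)),
        if_pos rfl]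
      ring
    · rw [if_neg (by decide),
        if_pos (by decide),
        if_neg (by decide),
        if_neg (by decide),
        if_pos (by decide),
        phi_binom,
        if_neg (hPA_single 2 2 _ (by decide)),
        if_neg (hPA_mP 1 3 _ (by decide) (by decide)),
        if_neg (by decide)]
      ring
    · rw [if_neg (by decide),
        if_pos (by decide),
        if_neg (by decide),
        if_neg (by decide),
        if_neg (by decide),
        phi_binom,
        if_neg (hPA_single 3 k₀ _ (by decide)),
        if_neg hxp3,
        if_neg (by decide)]
      ring
    · rw [if_neg (by decide),
        if_neg (by decide),
        if_pos (by decide),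
        if_pos (by decide),
        phi_binom,
        if_neg (hne_mA_q 2 (by decide)),
        if_neg (hne_mP_q 1),
        if_neg (by decide)]
      ring
    · rw [if_neg (by decide),
        if_neg (by decide),
        if_pos (by decide),
        if_neg (by decide),
        if_pos (by decide),
        phi_binom,
        if_neg (hne_mA_q 3 (by decide)),
        if_neg (hne_mP_q 2),
        if_neg (by decide)]
      ring
    · rw [if_neg (by decide),
        if_neg (by decide),
        if_pos (by decide),
        if_neg (by decide),
        if_neg (by decide),
        if_pos (by decide),
        phi_binom,
        if_pos rfl,
        if_neg (hne_mP_q 3),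
        if_pos rfl]
      ring
    · rw [if_neg (by decide),
        if_neg (by decide),
        if_pos (by decide),
        if_neg (by decide),
        if_neg (by decide),
        if_neg (by decide),
        phi_binom,
        if_neg hne_F_q,
        if_neg hne_pt_q,
        if_neg (by decide)]
      ring
    · rw [if_neg (by decide),
        if_neg (by decide),
        if_neg (by decide),
        if_pos (by decide),
        phi_binom,
        if_neg (hne_mA_F 2 (by decide)),
        if_neg (hne_mP_F 1),
        if_neg (by decide)]
      ring
    · rw [if_neg (by decide),
        if_neg (by decide),
        if_neg (by decide),
        if_neg (by decide),
        if_pos (by decide),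
        phi_binom,
        if_neg (hne_mA_F 3 (by decide)),
        if_neg (hne_mP_F 2),
        if_neg (by decide)]
      ring
    · rw [if_neg (by decide),
        if_neg (by decide),
        if_neg (by decide),
        if_neg (by decide),
        if_neg (by decide),
        if_pos (by decide),
        phi_binom,
        if_neg hne_q_F,
        if_neg (hne_mP_F 3),
        if_neg (by decide)]
      ring
    · rw [if_neg (by decide),
        if_neg (by decide),
        if_neg (by decide),
        if_neg (by decide),
        if_neg (by decide),
        if_neg (by decide),
        phi_binom,
        if_pos rfl,
        if_neg hne_pt_F,
        if_pos rfl]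
      ring

end Main4

end Stmt13Aux

open Stmt13Aux in
/-- Let `A = {d₁,…,dₙ}` be a generalized arithmetic sequence of
positive integers with `n ≥ 4`, `gcd(A) = 1`, minimally generating its numerical
semigroup. Then `I_A` is not a complete intersection. -/
theorem stmt13 (k : Type*) [Field k] (n : ℕ) (d : Fin n → ℕ)
    (hn : 4 ≤ n) (hpos : ∀ i, 0 < d i) (hga : IsGenArith d)
    (hgcd : Finset.univ.gcd d = 1) (hmin : MinimallyGenerates d) :
    ¬ IsCI k d := by
  intro hCI
  obtain ⟨h, e, hh, he, hdi'⟩ := hga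
  haveI : NeZero n := ⟨by omega⟩
  have hdi : ∀ i : Fin n, 0 < (i : ℕ) → d i = h * d 0 + (i : ℕ) * e := by
    intro i hi
    have h5 := hdi' i hi
    have h6 : (⟨0, i.pos⟩ : Fin n) = 0 := Fin.ext (by simp)
    rwa [h6] at h5
  have ha1 : 1 ≤ d 0 := hpos 0
  have hcop : Nat.Coprime (d 0) e := by
    have hdvd : Nat.gcd (d 0) e ∣ Finset.univ.gcd d := by
      apply Finset.dvd_gcd
      intro i _
      by_cases hi : (i : ℕ) = 0
      · have h6 : i = 0 := Fin.ext (by simp [hi])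
        rw [h6]
        exact Nat.gcd_dvd_left _ _
      · rw [hdi i (by omega)]
        exact Nat.dvd_add (Dvd.dvd.mul_left (Nat.gcd_dvd_left _ _) h)
          (Dvd.dvd.mul_left (Nat.gcd_dvd_right _ _) _)
    rw [hgcd] at hdvd
    exact Nat.dvd_one.mp hdvd
  have hna : n ≤ d 0 := by
    by_contra hna'
    push_neg at hna'
    apply hmin (⟨d 0, by omega⟩ : Fin n)
    refine ⟨fun j => if j = 0 then h + e else 0, ?_, ?_⟩
    · have h9 : (⟨d 0, by omega⟩ : Fin n) ≠ 0 := by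
        intro hi0
        have h7 := congrArg Fin.val hi0
        simp only [Fin.val_zero] at h7
        omega
      simp only [if_neg h9]
    · have hival : ((⟨d 0, by omega⟩ : Fin n) : ℕ) = d 0 := rfl
      rw [hdi _ (by rw [hival]; omega), hival]
      have h8 : ∀ j : Fin n, (if j = 0 then h + e else 0) * d j
          = (if j = 0 then (h + e) * d j else 0) := by
        intro j
        split <;> simp
      rw [Finset.sum_congr rfl (fun j _ => h8 j),
        Finset.sum_ite_eq' Finset.univ (0 : Fin n) (fun j => (h + e) * d j),
        if_pos (Finset.mem_univ _)]
      ring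
  rcases Nat.lt_or_ge n 5 with h5 | h5
  · have h4 : n = 4 := by omega
    subst h4
    exact main4 d (d 0) h e rfl hdi hh he hpos hmin hcop hna hCI
  · exact main5 d (d 0) h e h5 rfl hdi hh he hpos hmin hcop hna hCI
end

section
/- Let p, q be relatively prime positive integers, {F_n} the (p,q)-Fibonacci sequence, and let h, a, d be positive integers and n ≥ 3. Set d_1 = F_a and d_i = F_{h·a + (i−1)·d} for 2 ≤ i ≤ n. Then d_3 belongs to the semigroup ℕd_1 + ℕd_2 if and only if d is odd or F_{2d} ≥ lcm(d_1, F_d). Moreover, if d_3 ∈ ℕd_1 + ℕd_2, then d_i ∈ ℕd_1 + ℕd_2 for every i with 3 ≤ i ≤ n. -/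
open MvPolynomial

section helpers
variable (p q : ℕ)

local notation "F" => pqFib p q
local notation "L" => pqLucas p q

lemma pqFib_add_two (n : ℕ) : F (n+2) = p * F (n+1) + q * F n := rfl
lemma pqLucas_add_two (n : ℕ) : L (n+2) = p * L (n+1) + q * L n := rfl

lemma pqFib_pos (hp : 0 < p) : ∀ n, 0 < F (n+1) := by
  intro n
  induction n using Nat.twoStepInduction with
  | zero => simp [pqFib]
  | one => simpa [pqFib] using hp
  | more n ih1 ih2 =>
    rw [pqFib_add_two]
    exact Nat.add_pos_left (Nat.mul_pos hp ih2) _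

lemma pqFib_mono (hp : 0 < p) : Monotone F := by
  apply monotone_nat_of_le_succ
  intro n
  match n with
  | 0 => simp [pqFib]
  | n + 1 =>
    rw [pqFib_add_two]
    have := Nat.mul_le_mul hp (Nat.le_refl (F (n+1)))
    omega

lemma pqFib_add (m n : ℕ) : F (m + n + 1) = F (m+1) * F (n+1) + q * F m * F n := by
  induction n using Nat.twoStepInduction generalizing m with
  | zero => simp [pqFib]
  | one => simp [pqFib, show F 2 = p * 1 + q * 0 from rfl]; ring
  | more n ih1 ih2 =>
    have e1 := ih1 m
    have e2 := ih2 m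
    have g1 : m + (n + 2) + 1 = m + n + 1 + 2 := by omega
    have g2 : m + (n + 1) + 1 = m + n + 1 + 1 := by omega
    rw [g2] at e2
    have e4 : F (n + 2 + 1) = p * F (n + 1 + 1) + q * F (n + 1) := pqFib_add_two p q (n+1)
    rw [g1, pqFib_add_two p q (m + n + 1), e1, e2, e4, pqFib_add_two p q n]
    ring

lemma pqLucas_eq (d : ℕ) : L (d+1) = F (d+2) + q * F d := by
  induction d using Nat.twoStepInduction with
  | zero => simp [pqFib, pqLucas]
  | one =>
    show p * p + q * 2 = (p * (p * 1 + q * 0) + q * 1) + q * 1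
    ring
  | more d ih1 ih2 =>
    rw [pqLucas_add_two, ih1, ih2, pqFib_add_two p q (d+2), pqFib_add_two p q d]
    ring

lemma pqFib_docagne (t r : ℕ) :
    (F (t+r) * F (t+1) : ℤ) - F (t+r+1) * F t = (-(q:ℤ))^t * F r := by
  induction t with
  | zero => simp [pqFib]
  | succ t ih =>
    have h1 : t+1+r = (t+r)+1 := by omega
    have h2 : t+1+r+1 = (t+r)+2 := by omega
    rw [h2, h1, pqFib_add_two p q (t+r), pqFib_add_two p q t]
    push_cast
    push_cast at ih
    linear_combination (-(q:ℤ)) * ih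

end helpers

section more
variable (p q : ℕ)
local notation "F" => pqFib p q
local notation "L" => pqLucas p q

lemma pqLucas_mul (m d : ℕ) (hd : 0 < d) :
    (L d * F (m + d) : ℤ) = F (m + 2*d) + (-(q:ℤ))^d * F m := by
  obtain ⟨e, rfl⟩ : ∃ e, d = e + 1 := ⟨d - 1, by omega⟩
  have hL : L (e+1) = F (e+2) + q * F e := pqLucas_eq p q e
  have hA : F (m + 2*(e+1)) = F (m+e+1) * F (e+2) + q * F (m+e) * F (e+1) := by
    have := pqFib_add p q (m+e) (e+1)
    rw [show m + e + (e+1) + 1 = m + 2*(e+1) from by omega] at this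
    rw [this]
  have hD := pqFib_docagne p q e m
  have hD' : (F (m+e) * F (e+1) : ℤ) - F (m+e+1) * F e = (-(q:ℤ))^e * F m := by
    rw [show m+e = e+m from by omega]
    exact hD
  rw [show m + (e+1) = m + e + 1 from by omega, hL, hA]
  push_cast
  push_cast at hD'
  linear_combination (-(q:ℤ)) * hD'

lemma pqFib_dvd (a k : ℕ) : F a ∣ F (k * a) := by
  induction k with
  | zero => simp [pqFib]
  | succ k ih =>
    rcases Nat.eq_zero_or_pos a with rfl | hapos
    · simpa using ih
    obtain ⟨n, rfl⟩ : ∃ n, a = n + 1 := ⟨a-1, by omega⟩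
    have h1 : (k+1) * (n+1) = k*(n+1) + n + 1 := by ring
    rw [h1, pqFib_add p q (k*(n+1)) n]
    exact dvd_add (dvd_mul_left _ _) ((ih.mul_left q).mul_right (F n))

lemma pqFib_coprime_q (hpq : Nat.gcd p q = 1) : ∀ n, Nat.Coprime (F (n+1)) q := by
  intro n
  induction n using Nat.twoStepInduction with
  | zero => exact Nat.coprime_one_left q
  | one =>
    have h2 : F 2 = p := by simp [pqFib]
    rw [h2]; exact hpq
  | more n ih1 ih2 =>
    rw [pqFib_add_two, show p * F (n+1+1) + q * F (n+1) = p * F (n+1+1) + F (n+1) * q from by ring]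
    exact (Nat.coprime_add_mul_right_left (p * F (n+1+1)) q (F (n+1))).mpr
      (Nat.Coprime.mul hpq ih2)

lemma pqFib_coprime_succ (hpq : Nat.gcd p q = 1) : ∀ n, Nat.Coprime (F n) (F (n+1)) := by
  intro n
  induction n with
  | zero => exact Nat.coprime_zero_left 1 |>.mpr (by simp [pqFib])
  | succ n ih =>
    rw [pqFib_add_two, show p * F (n+1) + q * F n = q * F n + F (n+1) * p from by ring]
    refine (Nat.coprime_add_mul_left_right (F (n+1)) (q * F n) p).mpr ?_
    exact Nat.Coprime.mul_right (pqFib_coprime_q p q hpq n) ih.symm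

lemma pqFib_q_pow (m e : ℕ) : q^e * F m ≤ F (m + 2*e) := by
  induction e with
  | zero => simp
  | succ e ih =>
    have h1 : F (m + 2*(e+1)) = p * F (m + 2*e + 1) + q * F (m + 2*e) := by
      rw [show m + 2*(e+1) = (m + 2*e) + 2 from by omega]; rfl
    calc q^(e+1) * F m = q * (q^e * F m) := by ring
    _ ≤ q * F (m + 2*e) := Nat.mul_le_mul_left q ih
    _ ≤ F (m + 2*(e+1)) := by omega

lemma pqLucas_q_pow (e : ℕ) : 2 * q^e ≤ L (2*e) := by
  induction e with
  | zero => simp [pqLucas]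
  | succ e ih =>
    have h1 : L (2*(e+1)) = p * L (2*e + 1) + q * L (2*e) := by
      rw [show 2*(e+1) = (2*e) + 2 from by omega]; rfl
    have : q * (2 * q^e) ≤ q * L (2*e) := Nat.mul_le_mul_left q ih
    calc 2 * q^(e+1) = q * (2 * q^e) := by ring
    _ ≤ q * L (2*e) := this
    _ ≤ L (2*(e+1)) := by omega

lemma pqLucas_pos (hp : 0 < p) : ∀ n, 0 < L n := by
  intro n
  induction n using Nat.twoStepInduction with
  | zero => simp [pqLucas]
  | one => simpa [pqLucas] using hp
  | more n ih1 ih2 =>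
    rw [pqLucas_add_two]
    exact Nat.add_pos_left (Nat.mul_pos hp ih2) _

lemma pqLucas_even_ge3 (hp : 0 < p) (hq : 0 < q) (e : ℕ) : 3 ≤ L (2*(e+1)) := by
  induction e with
  | zero =>
    show 3 ≤ L 2
    have h2 : L 2 = p * p + q * 2 := rfl
    have := Nat.mul_le_mul hp hp
    omega
  | succ e ih =>
    have h1 : L (2*(e+1+1)) = p * L (2*(e+1) + 1) + q * L (2*(e+1)) := by
      rw [show 2*(e+1+1) = (2*(e+1)) + 2 from by omega]; rfl
    have := Nat.mul_le_mul hq (Nat.le_refl (L (2*(e+1))))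
    have hpos := pqLucas_pos p q hp (2*(e+1)+1)
    omega

end more

section main
variable (p q : ℕ)
local notation "F" => pqFib p q
local notation "L" => pqLucas p q

lemma pqFib_pos' (hp : 0 < p) {n : ℕ} (hn : 0 < n) : 0 < F n := by
  obtain ⟨m, rfl⟩ : ∃ m, n = m + 1 := ⟨n - 1, by omega⟩
  exact pqFib_pos p q hp m

lemma pqFib_coprime_q' (hpq : Nat.gcd p q = 1) {n : ℕ} (hn : 0 < n) :
    Nat.Coprime (F n) q := by
  obtain ⟨m, rfl⟩ : ∃ m, n = m + 1 := ⟨n - 1, by omega⟩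
  exact pqFib_coprime_q p q hpq m

lemma pqFib_two_mul {d : ℕ} (hd : 0 < d) : F (2*d) = F d * L d := by
  obtain ⟨e, rfl⟩ : ∃ e, d = e + 1 := ⟨d - 1, by omega⟩
  have h1 : F (2*(e+1)) = F (e+2) * F (e+1) + q * F (e+1) * F e := by
    have := pqFib_add p q (e+1) e
    rw [show e+1+e+1 = 2*(e+1) from by omega] at this
    rw [this]
  rw [h1, pqLucas_eq p q e]
  ring

lemma pqFib_odd_id (hd : 0 < d) (hodd : Odd d) (m : ℕ) :
    F (m + 2*d) = L d * F (m + d) + q^d * F m := by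
  have hid := pqLucas_mul p q m d hd
  have hneg : ((-(q:ℤ)))^d = -((q:ℤ)^d) := Odd.neg_pow hodd (q:ℤ)
  rw [hneg] at hid
  have : ((F (m + 2*d) : ℕ) : ℤ) = ((L d * F (m + d) + q^d * F m : ℕ) : ℤ) := by
    push_cast
    linarith
  exact_mod_cast this

lemma pqFib_even_id (hd : 0 < d) (hev : Even d) (m : ℕ) :
    (F (m + 2*d) : ℤ) = L d * F (m + d) - (q:ℤ)^d * F m := by
  have hid := pqLucas_mul p q m d hd
  have hneg : ((-(q:ℤ)))^d = (q:ℤ)^d := Even.neg_pow hev (q:ℤ)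
  rw [hneg] at hid
  linarith

end main

section main2
variable (p q : ℕ)
local notation "F" => pqFib p q
local notation "L" => pqLucas p q

set_option maxHeartbeats 2000000 in
lemma pq_construct (hp : 0 < p) (hq : 0 < q) (hpq : Nat.gcd p q = 1)
    {h a d : ℕ} (hh : 0 < h) (ha : 0 < a) (hd : 0 < d)
    (hcond : Odd d ∨ F a / Nat.gcd (F a) (F d) ≤ L d) :
    ∀ j, 1 ≤ j → ∃ α β : ℕ, F (h*a + j*d) = α * F a + β * F (h*a + d) := by
  have hha : 0 < h * a := Nat.mul_pos hh ha
  obtain ⟨b, hb⟩ : ∃ b, h * a = b + 1 := ⟨h*a - 1, by omega⟩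
  have hdvd_ha : F a ∣ F (b+1) := by rw [← hb]; exact pqFib_dvd p q a h
  rcases Nat.even_or_odd d with hev | hodd
  · -- even case
    have hM : F a / Nat.gcd (F a) (F d) ≤ L d := by
      rcases hcond with hodd | hM
      · exact absurd hodd (Nat.not_odd_iff_even.mpr hev)
      · exact hM
    obtain ⟨e, rfl⟩ : ∃ e, d = 2 * e := by
      obtain ⟨e, he⟩ := hev; exact ⟨e, by omega⟩
    have he : 0 < e := by omega
    obtain ⟨G, hG⟩ : ∃ G, G = Nat.gcd (F a) (F (2*e)) := ⟨_, rfl⟩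
    obtain ⟨M, hMdef⟩ : ∃ M, M = F a / G := ⟨_, rfl⟩
    rw [← hG, ← hMdef] at hM
    have hApos : 0 < F a := pqFib_pos' p q hp ha
    have hGa : G ∣ F a := hG ▸ Nat.gcd_dvd_left _ _
    have hGd : G ∣ F (2*e) := hG ▸ Nat.gcd_dvd_right _ _
    have hGpos : 0 < G := hG ▸ Nat.gcd_pos_of_pos_left _ hApos
    have hMpos : 0 < M := hMdef ▸ Nat.div_pos (Nat.le_of_dvd hApos hGa) hGpos
    have hAMF : F a ∣ M * F (2*e) := by
      obtain ⟨w, hw⟩ := hGd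
      exact ⟨w, by rw [hw, ← mul_assoc, hMdef, Nat.div_mul_cancel hGa]⟩
    have hexp : ∀ n, F (h*a + n) = F (b+1) * F (n+1) + q * F b * F n := by
      intro n
      have := pqFib_add p q b n
      rw [show b + n + 1 = h*a + n from by omega] at this
      exact this
    have hBpos : 0 < F (h*a + 2*e) := pqFib_pos' p q hp (by omega)
    have hfin : ∀ N βn : ℕ, βn * F (h*a + 2*e) ≤ N →
        ((F a : ℤ) ∣ (N : ℤ) - (βn * F (h*a + 2*e) : ℕ)) →
        ∃ α β : ℕ, N = α * F a + β * F (h*a + 2*e) := by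
      intro N βn hle hdvd
      rw [← Nat.cast_sub hle] at hdvd
      have hdvd' : F a ∣ N - βn * F (h*a + 2*e) := Int.natCast_dvd_natCast.mp hdvd
      refine ⟨(N - βn * F (h*a + 2*e)) / F a, βn, ?_⟩
      rw [Nat.div_mul_cancel hdvd']
      omega
    -- key growth bound
    have hq3 : q^e * F (h*a) ≤ F (h*a + 2*e) := pqFib_q_pow p q (h*a) e
    have hL2 : 2 * q^e ≤ L (2*e) := pqLucas_q_pow p q e
    have hL3 : 3 ≤ L (2*e) := by
      obtain ⟨e', rfl⟩ : ∃ e', e = e' + 1 := ⟨e - 1, by omega⟩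
      exact pqLucas_even_ge3 p q hp hq e'
    have hqe : 1 ≤ q^e := Nat.one_le_pow _ _ hq
    have hdvdha2 : F a ∣ F (h*a) := by rw [hb]; exact hdvd_ha
    -- growth claim
    have claim3 : L (2*e) * F (h*a + 2*e) ≤ F (h*a + 3*(2*e)) := by
      have i1 := pqFib_even_id p q hd hev (h*a + 2*e)
      rw [show h*a + 2*e + 2*(2*e) = h*a + 3*(2*e) from by ring,
          show h*a + 2*e + 2*e = h*a + 2*(2*e) from by ring] at i1
      have i2 := pqFib_even_id p q hd hev (h*a)
      rw [show h*a + 2*(2*e) = h*a + 2*(2*e) from rfl] at i2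
      have hq2e : ((q:ℤ))^(2*e) = (q:ℤ)^e * (q:ℤ)^e := by rw [two_mul, pow_add]
      rw [hq2e] at i1 i2
      have c3 : ((q:ℤ))^e * F (h*a) ≤ F (h*a + 2*e) := by exact_mod_cast hq3
      have c4 : ((q:ℤ))^e * F (h*a + 2*e) ≤ F (h*a + 2*(2*e)) := by
        have := pqFib_q_pow p q (h*a + 2*e) e
        rw [show h*a + 2*e + 2*e = h*a + 2*(2*e) from by ring] at this
        exact_mod_cast this
      have s1 : ((L (2*e) : ℤ)) * (L (2*e)) ≥ L (2*e) * (q:ℤ)^e + (q:ℤ)^e * (q:ℤ)^e + L (2*e) := by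
        have h2 : (2*((q:ℤ)^e) : ℤ) ≤ L (2*e) := by exact_mod_cast hL2
        have h3 : (3 : ℤ) ≤ L (2*e) := by exact_mod_cast hL3
        have h4 : (1 : ℤ) ≤ (q:ℤ)^e := by exact_mod_cast hqe
        nlinarith [sq_nonneg ((L (2*e) : ℤ) - 2*(q:ℤ)^e)]
      have z3 : (0:ℤ) ≤ ((F (h*a + 2*e)):ℤ) := by positivity
      have zL : (0:ℤ) ≤ ((L (2*e)):ℤ) := by positivity
      have zq : (0:ℤ) ≤ ((q:ℤ))^e := by positivity
      have eq1 : ((F (h*a + 3*(2*e))):ℤ) - L (2*e) * F (h*a + 2*e) =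
          ((L (2*e):ℤ) * L (2*e) - (L (2*e) * (q:ℤ)^e + (q:ℤ)^e * (q:ℤ)^e + L (2*e))) * F (h*a+2*e)
            + L (2*e) * (q:ℤ)^e * (F (h*a+2*e) - (q:ℤ)^e * F (h*a)) := by
        linear_combination i1 + (L (2*e) : ℤ) * i2
      have t1 : (0:ℤ) ≤ (L (2*e):ℤ) * (q:ℤ)^e * (F (h*a+2*e) - (q:ℤ)^e * F (h*a)) :=
        mul_nonneg (mul_nonneg zL zq) (by linarith)
      have t2 : (0:ℤ) ≤ ((L (2*e):ℤ) * L (2*e) - (L (2*e) * (q:ℤ)^e + (q:ℤ)^e * (q:ℤ)^e + L (2*e))) * F (h*a+2*e) :=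
        mul_nonneg (by linarith) z3
      have final : ((L (2*e) * F (h*a + 2*e) : ℕ) : ℤ) ≤ ((F (h*a + 3*(2*e))):ℤ) := by
        push_cast
        linarith
      exact_mod_cast final
    intro j hj
    rcases Nat.lt_or_ge j 3 with hj3 | hj3
    · interval_cases j
      · exact ⟨0, 1, by rw [show h*a + 1*(2*e) = h*a + 2*e from by ring]; omega⟩
      · -- j = 2
        have hid0 := pqFib_even_id p q hd hev (h*a)
        obtain ⟨A1, hA1⟩ : ∃ A1, A1 = q^(2*e) * F (h*a) := ⟨_, rfl⟩
        obtain ⟨B1, hB1⟩ : ∃ B1, B1 = M * F (h*a + 2*e) := ⟨_, rfl⟩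
        have hB1pos : 0 < B1 := hB1 ▸ Nat.mul_pos hMpos hBpos
        obtain ⟨k, hk⟩ : ∃ k, k = A1 / B1 + 1 := ⟨_, rfl⟩
        have hdm := Nat.div_add_mod A1 B1
        have hmlt := Nat.mod_lt A1 hB1pos
        have hkB : k * B1 = B1 * (A1/B1) + B1 := by rw [hk]; ring
        have hk1 : A1 < k * B1 := by
          rw [hkB, ← Nat.mul_succ]
          exact Nat.lt_mul_div_succ A1 hB1pos
        have hkM : k * M ≤ L (2*e) := by
          rcases Nat.eq_or_lt_of_le (show 1 ≤ k from hk ▸ Nat.succ_le_succ (Nat.zero_le _)) with h1 | h1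
          · rw [← h1, one_mul]; exact hM
          · have hk2 : (k-1) * B1 ≤ A1 := by
              rw [show k - 1 = A1 / B1 from by rw [hk]; exact Nat.succ_sub_one _]
              exact Nat.div_mul_le_self A1 B1
            have hpow : q^(2*e) = q^e * q^e := by rw [two_mul, pow_add]
            have hq4 : A1 ≤ q^e * F (h*a + 2*e) := by
              calc A1 = q^e * (q^e * F (h*a)) := by rw [hA1, hpow]; ring
              _ ≤ q^e * F (h*a+2*e) := Nat.mul_le_mul_left _ hq3
            have h5 : (k-1)*M*F (h*a+2*e) ≤ q^e * F (h*a+2*e) := by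
              rw [mul_assoc, ← hB1]
              exact le_trans hk2 hq4
            have h6 : (k-1)*M ≤ q^e := Nat.le_of_mul_le_mul_right h5 hBpos
            have h7 : M ≤ (k-1)*M := Nat.le_mul_of_pos_left M (by omega)
            have h8 : (k-1)*M + M = k*M := by
              have : (k-1+1)*M = (k-1)*M + M := by ring
              rw [← this, show k-1+1 = k from by omega]
            omega
        obtain ⟨βv, hβ⟩ : ∃ x, x = L (2*e) - k*M := ⟨_, rfl⟩
        have hcast : (βv:ℤ) = (L (2*e):ℤ) - (k:ℤ)*(M:ℤ) := by
          rw [hβ, Nat.cast_sub hkM]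
          push_cast
          ring
        have hMB : F a ∣ M * F (h*a + 2*e) := by
          obtain ⟨w1, hw1⟩ := hdvd_ha
          obtain ⟨w2, hw2⟩ := hAMF
          refine ⟨M * w1 * F (2*e+1) + q * F b * w2, ?_⟩
          calc M * F (h*a+2*e) = F (b+1) * (M * F (2*e+1)) + q * F b * (M * F (2*e)) := by
                rw [hexp (2*e)]; ring
          _ = (F a * w1) * (M * F (2*e+1)) + q * F b * (F a * w2) := by rw [hw1, hw2]
          _ = F a * (M * w1 * F (2*e+1) + q * F b * w2) := by ring
        have h5z : ((F (h*a + 2*(2*e))):ℤ) - ((βv * F (h*a+2*e) : ℕ):ℤ) =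
            ((k*(M*F (h*a+2*e)) : ℕ):ℤ) - ((q^(2*e)*F (h*a) : ℕ):ℤ) := by
          push_cast
          rw [hcast]
          linear_combination hid0
        have hdvd1 : (F a:ℤ) ∣ ((k*(M*F (h*a+2*e)) : ℕ):ℤ) :=
          Int.natCast_dvd_natCast.mpr (hMB.mul_left k)
        have hdvd2 : (F a:ℤ) ∣ ((q^(2*e)*F (h*a) : ℕ):ℤ) :=
          Int.natCast_dvd_natCast.mpr (hdvdha2.mul_left _)
        have hgeN : A1 ≤ k*(M*F (h*a+2*e)) := by
          rw [← hB1]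
          omega
        have hble : βv * F (h*a+2*e) ≤ F (h*a + 2*(2*e)) := by
          have hz : ((βv * F (h*a+2*e) : ℕ):ℤ) ≤ ((F (h*a + 2*(2*e))):ℤ) := by
            have : ((A1:ℕ):ℤ) ≤ ((k*(M*F (h*a+2*e)) : ℕ):ℤ) := by exact_mod_cast hgeN
            rw [hA1] at this
            linarith [h5z, this]
          exact_mod_cast hz
        exact hfin (F (h*a + 2*(2*e))) βv hble (by rw [h5z]; exact dvd_sub hdvd1 hdvd2)
    · -- j ≥ 3
      have hFdvd : F (2*e) ∣ F (j*(2*e)) := pqFib_dvd p q (2*e) j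
      obtain ⟨c, hcdef⟩ : ∃ c, c = F (j*(2*e)) / F (2*e) := ⟨_, rfl⟩
      have hcFd : c * F (2*e) = F (j*(2*e)) := hcdef ▸ Nat.div_mul_cancel hFdvd
      obtain ⟨βv, hβ⟩ : ∃ x, x = c % M := ⟨_, rfl⟩
      have hβM : βv < M := hβ ▸ Nat.mod_lt _ hMpos
      obtain ⟨t, ht⟩ : ∃ t, t = c / M := ⟨_, rfl⟩
      have hsplit : M * t + βv = c := by rw [ht, hβ]; exact Nat.div_add_mod c M
      have hmono : F (h*a + 3*(2*e)) ≤ F (h*a + j*(2*e)) := by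
        apply pqFib_mono p q hp
        have := Nat.mul_le_mul_right (2*e) hj3
        omega
      have hble : βv * F (h*a + 2*e) ≤ F (h*a + j*(2*e)) := by
        calc βv * F (h*a+2*e) ≤ L (2*e) * F (h*a+2*e) :=
              Nat.mul_le_mul_right _ (by omega)
        _ ≤ F (h*a+3*(2*e)) := claim3
        _ ≤ _ := hmono
      obtain ⟨w1, hw1⟩ := hdvd_ha
      obtain ⟨w2, hw2⟩ := hAMF
      have hdz : (F a : ℤ) ∣ ((F (h*a + j*(2*e))):ℤ) - ((βv * F (h*a+2*e) : ℕ):ℤ) := by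
        have z1 : ((F (h*a + j*(2*e))):ℤ) = (F a * w1) * F (j*(2*e)+1) + q * F b * (c * F (2*e)) := by
          have : F (h*a + j*(2*e)) = (F a * w1) * F (j*(2*e)+1) + q * F b * (c * F (2*e)) := by
            rw [hexp (j*(2*e)), hw1, hcFd]
          exact_mod_cast this
        have z2 : ((F (h*a + 2*e)):ℤ) = (F a * w1) * F (2*e+1) + q * F b * F (2*e) := by
          have : F (h*a + 2*e) = (F a * w1) * F (2*e+1) + q * F b * F (2*e) := by
            rw [hexp (2*e), hw1]
          exact_mod_cast this
        have z3 : ((c:ℕ):ℤ) = (M:ℤ) * (t:ℤ) + βv := by exact_mod_cast hsplit.symm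
        have z4 : ((M:ℕ):ℤ) * F (2*e) = F a * w2 := by exact_mod_cast hw2
        refine ⟨(w1:ℤ) * F (j*(2*e)+1) - (βv:ℤ) * w1 * F (2*e+1) + (q:ℤ) * F b * (t:ℤ) * w2, ?_⟩
        push_cast
        linear_combination z1 - (βv:ℤ)*z2 + ((q:ℤ)*(F b)*(F (2*e)))*z3 + ((q:ℤ)*(F b)*(t:ℤ))*z4
      exact hfin _ βv hble hdz
  · -- odd case
    obtain ⟨c0, hc0⟩ := hdvd_ha
    have key : ∀ k, ∃ α β : ℕ, F (h*a + (k+1)*d) = α * F a + β * F (h*a + d) := by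
      intro k
      induction k using Nat.twoStepInduction with
      | zero => exact ⟨0, 1, by rw [show h*a + (0+1)*d = h*a + d from by ring]; omega⟩
      | one =>
        refine ⟨q^d * c0, L d, ?_⟩
        have hkey := pqFib_odd_id p q hd hodd (h*a)
        rw [show h*a + (1+1)*d = h*a + 2*d from by ring, hkey, hb, hc0]
        ring
      | more k ih1 ih2 =>
        obtain ⟨α1, β1, e1⟩ := ih1
        obtain ⟨α2, β2, e2⟩ := ih2
        refine ⟨L d * α2 + q^d * α1, L d * β2 + q^d * β1, ?_⟩
        have hkey := pqFib_odd_id p q hd hodd (h*a + (k+1)*d)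
        rw [show h*a + (k+1)*d + 2*d = h*a + (k+2+1)*d from by ring] at hkey
        rw [hkey, show h*a + (k+1)*d + d = h*a + (k+1+1)*d from by ring, e2, e1]
        ring
    intro j hj
    obtain ⟨k, rfl⟩ : ∃ k, j = k + 1 := ⟨j - 1, by omega⟩
    exact key k

end main2

section main3
variable (p q : ℕ)
local notation "F" => pqFib p q
local notation "L" => pqLucas p q

set_option maxHeartbeats 1000000 in
lemma pq_necessity (hp : 0 < p) (hq : 0 < q) (hpq : Nat.gcd p q = 1)
    {h a d : ℕ} (hh : 0 < h) (ha : 0 < a) (hd : 0 < d) (hev : Even d)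
    (hex : ∃ α β : ℕ, F (h*a + 2*d) = α * F a + β * F (h*a + d)) :
    F a / Nat.gcd (F a) (F d) ≤ L d := by
  obtain ⟨α, β, hαβ⟩ := hex
  have hha : 0 < h * a := Nat.mul_pos hh ha
  obtain ⟨b, hb⟩ : ∃ b, h * a = b + 1 := ⟨h*a - 1, by omega⟩
  have hdvd_ha : F a ∣ F (b+1) := by rw [← hb]; exact pqFib_dvd p q a h
  have hApos : 0 < F a := pqFib_pos' p q hp ha
  have hBpos : 0 < F (h*a + d) := pqFib_pos' p q hp (by omega)
  have hhapos : 0 < F (h*a) := pqFib_pos' p q hp hha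
  have hid := pqFib_even_id p q hd hev (h*a)
  have h2 : ((F (h*a+2*d) : ℕ):ℤ) = (α:ℤ) * F a + (β:ℤ) * F (h*a+d) := by
    exact_mod_cast hαβ
  have hβL : β < L d := by
    by_contra hcon
    push_neg at hcon
    have h1 : ((L d:ℕ) : ℤ) * F (h*a+d) ≤ (β:ℤ) * F (h*a+d) := by
      have hc : ((L d : ℕ):ℤ) ≤ (β:ℤ) := by exact_mod_cast hcon
      exact mul_le_mul_of_nonneg_right hc (by positivity)
    have h3 : (0:ℤ) ≤ (α:ℤ) * F a := by positivity
    have h4 : (0:ℤ) < (q:ℤ)^d * F (h*a) := by positivity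
    linarith
  obtain ⟨u, hu⟩ : ∃ u, L d = β + (u+1) := ⟨L d - β - 1, by omega⟩
  have hexp : F (h*a + d) = F (b+1) * F (d+1) + q * F b * F d := by
    have := pqFib_add p q b d
    rw [show b + d + 1 = h*a + d from by omega] at this
    exact this
  obtain ⟨w1, hw1⟩ := hdvd_ha
  have key : ((u:ℤ)+1) * F (h*a+d) = (α:ℤ) * F a + (q:ℤ)^d * F (h*a) := by
    have hu' : ((L d : ℕ):ℤ) = (β:ℤ) + ((u:ℤ)+1) := by exact_mod_cast hu
    linear_combination h2 - hid - (F (h*a+d):ℤ) * hu'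
  have hdvdN : F a ∣ (u+1) * (q * F b * F d) := by
    refine Int.natCast_dvd_natCast.mp ?_
    have hexpz : ((F (h*a+d):ℕ):ℤ) = ((F a:ℤ) * w1) * F (d+1) + (q:ℤ)*F b*F d := by
      exact_mod_cast hexp.trans (by rw [hw1])
    have hFha : ((F (h*a):ℕ):ℤ) = (F a:ℤ) * w1 := by
      have : F (h*a) = F a * w1 := by rw [hb, hw1]
      exact_mod_cast this
    have hz : (((u+1) * (q * F b * F d) : ℕ) : ℤ) =
        (F a:ℤ) * ((α:ℤ) + (q:ℤ)^d*w1 - ((u:ℤ)+1)*w1*F (d+1)) := by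
      push_cast
      linear_combination key - ((u:ℤ)+1)*hexpz + (q:ℤ)^d * hFha
    exact ⟨_, hz⟩
  have hcopq : Nat.Coprime (F a) q := pqFib_coprime_q' p q hpq ha
  have hcopb : Nat.Coprime (F a) (F b) :=
    Nat.Coprime.coprime_dvd_left ⟨w1, hw1⟩ ((pqFib_coprime_succ p q hpq b).symm)
  have hcop : Nat.Coprime (F a) (q * F b) := Nat.Coprime.mul_right hcopq hcopb
  have hdvd2 : F a ∣ (u+1) * F d := by
    have hh2 : F a ∣ ((u+1) * F d) * (q * F b) := by
      rw [show ((u+1)*F d)*(q*F b) = (u+1)*(q*F b*F d) from by ring]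
      exact hdvdN
    exact Nat.Coprime.dvd_of_dvd_mul_right hcop hh2
  -- conclude M ∣ u+1
  have hGpos : 0 < Nat.gcd (F a) (F d) := Nat.gcd_pos_of_pos_left _ hApos
  have hGa : Nat.gcd (F a) (F d) ∣ F a := Nat.gcd_dvd_left _ _
  have hGd : Nat.gcd (F a) (F d) ∣ F d := Nat.gcd_dvd_right _ _
  have hcop2 : Nat.Coprime (F a / Nat.gcd (F a) (F d)) (F d / Nat.gcd (F a) (F d)) :=
    Nat.coprime_div_gcd_div_gcd hGpos
  have h1 : F a / Nat.gcd (F a) (F d) ∣ (u+1) * (F d / Nat.gcd (F a) (F d)) := by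
    obtain ⟨x, hx⟩ := hGa
    obtain ⟨y, hy⟩ := hGd
    have hxx : F a / Nat.gcd (F a) (F d) = x :=
      Nat.div_eq_of_eq_mul_left hGpos (by conv_lhs => rw [hx, mul_comm])
    have hyy : F d / Nat.gcd (F a) (F d) = y :=
      Nat.div_eq_of_eq_mul_left hGpos (by conv_lhs => rw [hy, mul_comm])
    rw [hxx, hyy]
    have : Nat.gcd (F a) (F d) * x ∣ Nat.gcd (F a) (F d) * ((u+1) * y) := by
      rw [← hx, show Nat.gcd (F a) (F d) * ((u+1)*y) = (u+1) * (Nat.gcd (F a) (F d) * y) from by ring, ← hy]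
      exact hdvd2
    exact (mul_dvd_mul_iff_left (by omega : Nat.gcd (F a) (F d) ≠ 0)).mp this
  have hMdvd : F a / Nat.gcd (F a) (F d) ∣ (u+1) :=
    Nat.Coprime.dvd_of_dvd_mul_right hcop2 h1
  have := Nat.le_of_dvd (by omega) hMdvd
  omega

lemma pq_lcm_iff (hp : 0 < p) {a d : ℕ} (ha : 0 < a) (hd : 0 < d) :
    Nat.lcm (F a) (F d) ≤ F (2*d) ↔ F a / Nat.gcd (F a) (F d) ≤ L d := by
  have hApos : 0 < F a := pqFib_pos' p q hp ha
  have hdpos : 0 < F d := pqFib_pos' p q hp hd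
  have h2d : F (2*d) = F d * L d := pqFib_two_mul p q hd
  have hGpos : 0 < Nat.gcd (F a) (F d) := Nat.gcd_pos_of_pos_left _ hApos
  have hGa : Nat.gcd (F a) (F d) ∣ F a := Nat.gcd_dvd_left _ _
  have hlcm : Nat.lcm (F a) (F d) = (F a / Nat.gcd (F a) (F d)) * F d := by
    obtain ⟨x, hx⟩ := hGa
    have hxx : F a / Nat.gcd (F a) (F d) = x :=
      Nat.div_eq_of_eq_mul_left hGpos (by conv_lhs => rw [hx, mul_comm])
    rw [Nat.lcm, hxx]
    refine Nat.div_eq_of_eq_mul_left hGpos ?_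
    conv_lhs => rw [hx]
    ring
  rw [hlcm, h2d]
  constructor
  · intro hle
    have : (F a / Nat.gcd (F a) (F d)) * F d ≤ L d * F d := by
      rw [show L d * F d = F d * L d from by ring]; exact hle
    exact Nat.le_of_mul_le_mul_right this hdpos
  · intro hle
    calc (F a / Nat.gcd (F a) (F d)) * F d ≤ L d * F d := Nat.mul_le_mul_right _ hle
    _ = F d * L d := by ring

end main3


/-- With `d₁ = F_a`, `d_i = F_{h·a + (i−1)·d}` for `i ≥ 2` in the
`(p,q)`-Fibonacci sequence, `d₃ ∈ ℕd₁ + ℕd₂` iff `d` is odd or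
`F_{2d} ≥ lcm(d₁, F_d)`; moreover, if `d₃ ∈ ℕd₁ + ℕd₂`, then `d_i ∈ ℕd₁ + ℕd₂`
for every `3 ≤ i ≤ n`. -/
theorem stmt14 (p q : ℕ) (hp : 0 < p) (hq : 0 < q) (hpq : Nat.gcd p q = 1)
    (h a d : ℕ) (hh : 0 < h) (ha : 0 < a) (hd : 0 < d) (n : ℕ) (hn : 3 ≤ n)
    (D : ℕ → ℕ) (hD1 : D 1 = pqFib p q a)
    (hDi : ∀ i, 2 ≤ i → D i = pqFib p q (h * a + (i - 1) * d)) :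
    ((∃ α β : ℕ, D 3 = α * D 1 + β * D 2) ↔
        (Odd d ∨ Nat.lcm (D 1) (pqFib p q d) ≤ pqFib p q (2 * d))) ∧
      ((∃ α β : ℕ, D 3 = α * D 1 + β * D 2) →
        ∀ i, 3 ≤ i → i ≤ n → ∃ α β : ℕ, D i = α * D 1 + β * D 2) := by
  have hD2 : D 2 = pqFib p q (h*a + d) := by
    rw [hDi 2 (by norm_num), show h*a + (2-1)*d = h*a + d from by omega]
  have hD3 : D 3 = pqFib p q (h*a + 2*d) := by
    rw [hDi 3 (by norm_num), show h*a + (3-1)*d = h*a + 2*d from by omega]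
  have bridge : (∃ α β : ℕ, D 3 = α * D 1 + β * D 2) ↔
      ∃ α β : ℕ, pqFib p q (h*a + 2*d) = α * pqFib p q a + β * pqFib p q (h*a + d) := by
    rw [hD1, hD2, hD3]
  have condIff : (Odd d ∨ Nat.lcm (D 1) (pqFib p q d) ≤ pqFib p q (2*d)) ↔
      (Odd d ∨ pqFib p q a / Nat.gcd (pqFib p q a) (pqFib p q d) ≤ pqLucas p q d) := by
    rw [hD1]
    exact or_congr_right (pq_lcm_iff p q hp ha hd)
  have fwd : (∃ α β : ℕ, D 3 = α * D 1 + β * D 2) →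
      (Odd d ∨ pqFib p q a / Nat.gcd (pqFib p q a) (pqFib p q d) ≤ pqLucas p q d) := by
    intro hex
    rcases Nat.even_or_odd d with hev | hodd
    · exact Or.inr (pq_necessity p q hp hq hpq hh ha hd hev (bridge.mp hex))
    · exact Or.inl hodd
  have bwd := pq_construct p q hp hq hpq hh ha hd
  constructor
  · constructor
    · intro hex; exact condIff.mpr (fwd hex)
    · intro hcond
      exact bridge.mpr (bwd (condIff.mp hcond) 2 (by norm_num))
  · intro hex i hi3 hin
    obtain ⟨α, β, hsol⟩ := bwd (fwd hex) (i-1) (by omega)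
    refine ⟨α, β, ?_⟩
    rw [hDi i (by omega), hD1, hD2, show h*a + (i-1)*d = h*a + (i-1)*d from rfl]
    exact hsol
end

section
/- Let p, q be relatively prime positive integers, {F_n} the (p,q)-Fibonacci sequence and {L_n} the (p,q)-Lucas sequence, and let a, d be positive integers and n ≥ 3. Set d_i = L_{a + (i−1)·d} for 1 ≤ i ≤ n. Then d_3 belongs to the semigroup ℕd_1 + ℕd_2 if and only if d is odd or F_{2d} ≥ lcm(d_1, F_d). Moreover, if d_3 ∈ ℕd_1 + ℕd_2, then d_i ∈ ℕd_1 + ℕd_2 for every i with 3 ≤ i ≤ n. -/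
open MvPolynomial

namespace PQaux

variable {p q : ℕ}

local notation "F" => pqFib p q
local notation "L" => pqLucas p q

lemma F0 : F 0 = 0 := rfl
lemma F1 : F 1 = 1 := rfl
lemma Frec (n : ℕ) : F (n+2) = p * F (n+1) + q * F n := rfl
lemma L0 : L 0 = 2 := rfl
lemma L1 : L 1 = p := rfl
lemma Lrec (n : ℕ) : L (n+2) = p * L (n+1) + q * L n := rfl

lemma F2 : F 2 = p := by
  show p * F 1 + q * F 0 = p
  simp [F1, F0]

lemma L2 : L 2 = p * p + q * 2 := by
  show p * L 1 + q * L 0 = _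
  simp [L1, L0]

lemma F_pos (hp : 0 < p) : ∀ n, 0 < n → 0 < F n := by
  intro n hn
  induction n using Nat.twoStepInduction with
  | zero => omega
  | one => simp [F1]
  | more n ih _ =>
    rcases Nat.eq_zero_or_pos n with h | h
    · subst h
      simpa [F2] using hp
    · have h2 := ih h
      rw [Frec]
      have : 0 < p * F (n+1) := Nat.mul_pos hp (by
        rcases Nat.eq_zero_or_pos (F (n+1)) with h3 | h3
        · exfalso
          rcases n with _ | m
          · omega
          · exact absurd h3 (by
              rw [Frec]
              have := ih h
              positivity)
        · exact h3)
      omega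

lemma L_pos (hp : 0 < p) : ∀ n, 0 < L n := by
  intro n
  induction n using Nat.twoStepInduction with
  | zero => simp [L0]
  | one => simpa [L1] using hp
  | more n ih ih2 => rw [Lrec]; positivity

lemma L_mono (hp : 0 < p) {m n : ℕ} (hm : 1 ≤ m) (hmn : m ≤ n) : L m ≤ L n := by
  induction n with
  | zero => omega
  | succ n ih =>
    rcases Nat.lt_or_ge m (n+1) with h | h
    · have h1 : m ≤ n := by omega
      refine le_trans (ih h1) ?_
      have hn : 1 ≤ n := by omega
      obtain ⟨k, rfl⟩ : ∃ k, n = k + 1 := ⟨n - 1, by omega⟩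
      rw [Lrec]
      calc L (k+1) ≤ p * L (k+1) := Nat.le_mul_of_pos_left _ hp
        _ ≤ p * L (k+1) + q * L k := Nat.le_add_right _ _
    · have : m = n + 1 := by omega
      subst this; rfl

lemma addF (m n : ℕ) : F (m+n+1) = F (m+1) * F (n+1) + q * F m * F n := by
  induction n using Nat.twoStepInduction with
  | zero => simp [F1, F0]
  | one =>
    show F (m+1+1) = F (m+1) * F 2 + q * F m * F 1
    rw [show m+1+1 = m+2 from rfl, Frec, F2, F1]
    ring
  | more n ih ih2 =>
    have e1 : m + (n+2) + 1 = (m + n + 1) + 2 := by ring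
    have e2 : m + (n+1) + 1 = (m + n + 1) + 1 := by ring
    have e3 : n + 2 + 1 = (n+1) + 2 := by ring
    rw [e1, Frec, ← e2, ih2, ih, e3]
    simp only [Frec (n:=n+1), Frec (n:=n)]
    ring

lemma addL (m n : ℕ) : L (m+n+1) = L (m+1) * F (n+1) + q * L m * F n := by
  induction n using Nat.twoStepInduction with
  | zero => simp [F1, F0]
  | one =>
    show L (m+1+1) = L (m+1) * F 2 + q * L m * F 1
    rw [show m+1+1 = m+2 from rfl, Lrec, F2, F1]
    ring
  | more n ih ih2 =>
    have e1 : m + (n+2) + 1 = (m + n + 1) + 2 := by ring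
    have e2 : m + (n+1) + 1 = (m + n + 1) + 1 := by ring
    have e3 : n + 2 + 1 = (n+1) + 2 := by ring
    rw [e1, Lrec, ← e2, ih2, ih, e3]
    simp only [Frec (n:=n+1), Frec (n:=n)]
    ring

lemma LF (n : ℕ) : L (n+1) = F (n+2) + q * F n := by
  induction n using Nat.twoStepInduction with
  | zero =>
    show L 1 = F 2 + q * F 0
    simp [L1, F0, F2]
  | one =>
    show L 2 = F 3 + q * F 1
    rw [L2, show F 3 = F (1+2) from rfl, Frec, F2, F1]
    ring
  | more n ih ih2 =>
    rw [Lrec, ih2, ih, Frec (n:=n+2), Frec (n:=n)]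
    ring

lemma F2d {d : ℕ} (hd : 1 ≤ d) : F (2*d) = F d * L d := by
  obtain ⟨e, rfl⟩ : ∃ e, d = e + 1 := ⟨d - 1, by omega⟩
  have h := addF (p := p) (q := q) (e+1) e
  have e1 : 2 * (e+1) = (e+1) + e + 1 := by ring
  rw [e1, h, LF]
  ring

lemma Fdvd {d : ℕ} (hd : 1 ≤ d) (k : ℕ) : F d ∣ F (k*d) := by
  induction k with
  | zero => simp [F0]
  | succ k ih =>
    obtain ⟨e, rfl⟩ : ∃ e, d = e + 1 := ⟨d - 1, by omega⟩
    have e1 : (k+1) * (e+1) = k * (e+1) + e + 1 := by ring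
    rw [e1, addF]
    refine Nat.dvd_add (Dvd.dvd.mul_left (dvd_refl _) _) ?_
    have : q * F (k * (e+1)) * F e = (q * F e) * F (k * (e+1)) := by ring
    rw [this]
    exact Dvd.dvd.mul_left ih _


lemma Zident (d m : ℕ) :
    (L d : ℤ) * L (m + d) = L (m + 2*d) + (-(q:ℤ))^d * L m := by
  induction d using Nat.twoStepInduction generalizing m with
  | zero => simp [L0]; push_cast; ring
  | one =>
    have h : (L (m + 2) : ℤ) = p * L (m+1) + q * L m := by
      rw [Lrec]; push_cast; ring
    simp only [L1, pow_one, show m + 2*1 = m + 2 from by ring, h]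
    push_cast; ring
  | more d ih ih2 =>
    have hrec : (L (d+2) : ℤ) = p * L (d+1) + q * L d := by
      rw [Lrec]; push_cast; ring
    have e1 : m + (d + 2) = m + 1 + (d + 1) := by ring
    have hL3 : (L (m + 2*(d+2)) : ℤ) = p * L (m + 2*d + 3) + q * L (m + 2*d + 2) := by
      rw [show m + 2*(d+2) = (m + 2*d + 2) + 2 from by ring, Lrec]; push_cast; ring
    have hLm2 : (L (m+2) : ℤ) = p * L (m+1) + q * L m := by
      rw [Lrec]; push_cast; ring
    rw [hrec, e1]
    have h1' : (L (d+1) : ℤ) * L (m + 1 + (d+1)) = L (m + 2*d + 3) + (-(q:ℤ))^(d+1) * L (m+1) := by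
      rw [ih2 (m+1), show m + 1 + 2*(d+1) = m + 2*d + 3 from by ring]
    have h2' : (L d : ℤ) * L (m + 1 + (d+1)) = L (m + 2*d + 2) + (-(q:ℤ))^d * L (m+2) := by
      rw [show m + 1 + (d+1) = m + 2 + d from by ring, ih (m+2),
        show m + 2 + 2*d = m + 2*d + 2 from by ring]
    calc ((p:ℤ) * L (d+1) + q * L d) * L (m + 1 + (d+1))
        = p * ((L (d+1):ℤ) * L (m+1+(d+1))) + q * ((L d : ℤ) * L (m+1+(d+1))) := by ring
      _ = p * ((L (m + 2*d + 3):ℤ) + (-(q:ℤ))^(d+1) * L (m+1))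
          + q * ((L (m + 2*d + 2):ℤ) + (-(q:ℤ))^d * L (m+2)) := by rw [h1', h2']
      _ = (L (m + 2*(d+2)) : ℤ) + (-(q:ℤ))^(d+2) * L m := by
          rw [hL3, hLm2]; ring

lemma Zident_odd {d : ℕ} (hd : Odd d) (m : ℕ) :
    L (m + 2*d) = L d * L (m + d) + q^d * L m := by
  have h := Zident (p := p) (q := q) d m
  rw [Odd.neg_pow hd] at h
  have h2 : ((L (m + 2*d) : ℕ) : ℤ) = ((L d * L (m + d) + q^d * L m : ℕ) : ℤ) := by
    push_cast
    linarith
  exact_mod_cast h2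

lemma Zident_even {d : ℕ} (hd : Even d) (m : ℕ) :
    L (m + 2*d) + q^d * L m = L d * L (m + d) := by
  have h := Zident (p := p) (q := q) d m
  rw [Even.neg_pow hd] at h
  have h2 : ((L (m + 2*d) + q^d * L m : ℕ) : ℤ) = ((L d * L (m + d) : ℕ) : ℤ) := by
    push_cast
    linarith
  exact_mod_cast h2

lemma L2k (k : ℕ) : 2 * q^k ≤ L (2*k) := by
  induction k with
  | zero => simp [L0]
  | succ k ih =>
    rw [show 2*(k+1) = 2*k+2 from by ring, Lrec]
    calc 2 * q^(k+1) = q * (2 * q^k) := by ring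
      _ ≤ q * L (2*k) := Nat.mul_le_mul_left _ ih
      _ ≤ p * L (2*k+1) + q * L (2*k) := Nat.le_add_left _ _

lemma coprime_L_q (hpq : Nat.Coprime p q) : ∀ n, 1 ≤ n → Nat.Coprime (L n) q := by
  intro n hn
  induction n using Nat.twoStepInduction with
  | zero => omega
  | one => simpa [L1] using hpq
  | more n ih ih2 =>
    rw [Lrec]
    have h1 : (p * L (n+1)).Coprime q :=
      Nat.Coprime.mul hpq (ih2 (by omega))
    exact (Nat.coprime_add_mul_left_left (p * L (n+1)) q (L n)).mpr h1

lemma gcd_L_succ (hp : 0 < p) (hpq : Nat.Coprime p q) (n : ℕ) :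
    Nat.gcd (L n) (L (n+1)) = Nat.gcd 2 p := by
  induction n with
  | zero => simp [L0, L1]
  | succ n ih =>
    have hc : Nat.Coprime q (L (n+1)) := (coprime_L_q hpq (n+1) (by omega)).symm
    rw [Lrec,
      show p * L (n+1) + q * L n = q * L n + L (n+1) * p from by ring,
      Nat.gcd_add_mul_left_right (L (n+1)) (q * L n) p,
      Nat.Coprime.gcd_mul_left_cancel_right (L n) hc,
      Nat.gcd_comm]
    exact ih


lemma p_even_struct (hp2 : 2 ∣ p) (hq2 : q % 2 = 1) (k : ℕ) :
    L (2*k) % 4 = 2 ∧ ∃ m, m % 2 = 1 ∧ L (2*k+1) = p * m := by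
  induction k with
  | zero => exact ⟨rfl, 1, rfl, by simp [L1]⟩
  | succ k ih =>
    obtain ⟨h4, m, hm, hLm⟩ := ih
    have key : L (2*k+2) % 4 = 2 := by
      rw [Lrec, hLm]
      obtain ⟨p', hp'⟩ := hp2
      have e1 : p * (p * m) = 4 * (p' * p' * m) := by rw [hp']; ring
      obtain ⟨t, ht⟩ : ∃ t, L (2*k) = 4 * t + 2 := ⟨L (2*k) / 4, by omega⟩
      obtain ⟨j, hj⟩ : ∃ j, q = 2 * j + 1 := ⟨q / 2, by omega⟩
      have e2 : q * L (2*k) = 4 * (2*j*t + j + t) + 2 := by rw [ht, hj]; ring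
      omega
    refine ⟨by rw [show 2*(k+1) = 2*k+2 from by ring]; exact key, L (2*k+2) + q * m, ?_, ?_⟩
    · have h3 : (q * m) % 2 = 1 := by rw [Nat.mul_mod, hq2, hm]
      omega
    · rw [show 2*(k+1)+1 = (2*k+1)+2 from by ring, Lrec, hLm]
      ring

lemma two_dvd_F_even (hp2 : 2 ∣ p) {d : ℕ} (hd2 : 2 ∣ d) : p ∣ F d := by
  obtain ⟨k, rfl⟩ := hd2
  have h := Fdvd (p := p) (q := q) (d := 2) (by omega) k
  rw [show k * 2 = 2 * k from by ring] at h
  exact (by simpa [F2] using h : p ∣ F (2*k))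

lemma gcd_key (hp : 0 < p) (hq : 0 < q) (hpq : Nat.Coprime p q)
    {a d : ℕ} (ha : 1 ≤ a) (hd2 : 2 ∣ d) (hd : 1 ≤ d) :
    Nat.gcd (L a) (L (a+d)) = Nat.gcd (L a) (F d) := by
  have hLa : 0 < L a := L_pos hp a
  have hFd : 0 < F d := F_pos hp d hd
  set g := Nat.gcd (L a) (F d) with hg
  have hgpos : 0 < g := Nat.gcd_pos_of_pos_left _ hLa
  have hgl : g ∣ L a := Nat.gcd_dvd_left _ _
  have hgf : g ∣ F d := Nat.gcd_dvd_right _ _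
  set l := L a / g with hl
  set f := F d / g with hf
  have hLag : L a = g * l := (Nat.mul_div_cancel' hgl).symm
  have hFdg : F d = g * f := (Nat.mul_div_cancel' hgf).symm
  have hlf : Nat.Coprime l f := Nat.coprime_div_gcd_div_gcd hgpos
  -- step 1: rewrite L (a+d)
  have h1 : L (a+d) = L (a+1) * F d + L a * (q * F (d-1)) := by
    have := addL (p := p) (q := q) a (d-1)
    rw [show a + (d-1) + 1 = a + d from by omega, show d - 1 + 1 = d from by omega] at this
    rw [this]; ring
  rw [h1, Nat.gcd_add_mul_left_right (L a) (L (a+1) * F d) (q * F (d-1))]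
  -- step 2: coprime l (L (a+1))
  have hcop : Nat.Coprime l (L (a+1)) := by
    by_contra hc
    -- common prime divisor
    obtain ⟨r, hrp, hrl, hrL⟩ := Nat.Prime.not_coprime_iff_dvd.mp hc
    have hrLa : r ∣ L a := hrl.trans ⟨g, by rw [hLag]; ring⟩
    have hrgcd : r ∣ Nat.gcd 2 p := by
      rw [← gcd_L_succ hp hpq a]
      exact Nat.dvd_gcd hrLa hrL
    have hre : r = 2 := by
      have hr2' : r ∣ 2 := hrgcd.trans (Nat.gcd_dvd_left 2 p)
      have := hrp.two_le
      have := Nat.le_of_dvd (by norm_num) hr2'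
      omega
    have hp2 : 2 ∣ p := by
      rw [← hre]
      exact hrgcd.trans (Nat.gcd_dvd_right 2 p)
    subst hre
    have hq2 : q % 2 = 1 := by
      rcases Nat.even_or_odd q with h | h
      · exfalso
        obtain ⟨j, hj⟩ := h
        have h2 : 2 ∣ Nat.gcd p q := Nat.dvd_gcd hp2 ⟨j, by omega⟩
        have h1 : Nat.gcd p q = 1 := hpq
        omega
      · exact Nat.odd_iff.mp h
    have hpF : p ∣ F d := two_dvd_F_even hp2 hd2
    -- cases on parity of a
    rcases Nat.even_or_odd a with hae | hao
    · obtain ⟨j, hj⟩ := hae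
      have h4 : L a % 4 = 2 := by
        rw [show a = 2*j from by omega]
        exact (p_even_struct hp2 hq2 j).1
      have h2g : 2 ∣ g := Nat.dvd_gcd (by omega) (dvd_trans hp2 hpF)
      have h2l : 2 ∣ l := hrl
      obtain ⟨g', hg'⟩ := h2g
      obtain ⟨l', hl'⟩ := h2l
      have h44 : L a = 4 * (g' * l') := by rw [hLag, hg', hl']; ring
      omega
    · obtain ⟨j, hj⟩ := hao
      obtain ⟨m, hm, hLm'⟩ := (p_even_struct hp2 hq2 j).2
      have hLm : L a = p * m := by rw [hj]; exact hLm'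
      obtain ⟨f'', hf''⟩ := hpF
      have hgeq : g = p * Nat.gcd m f'' := by
        rw [hg, hLm, hf'', Nat.gcd_mul_left]
      have hleq : l * Nat.gcd m f'' = m := by
        have : l * g = L a := by rw [hLag]; ring
        rw [hgeq, hLm] at this
        have hppos : 0 < p := hp
        have := this
        -- l * (p * gcd) = p * m
        have h5 : p * (l * Nat.gcd m f'') = p * m := by
          rw [← this]; ring
        exact Nat.eq_of_mul_eq_mul_left hppos h5
      have h2m : 2 ∣ m := by
        obtain ⟨l', hl'⟩ := hrl
        refine ⟨l' * Nat.gcd m f'', ?_⟩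
        calc m = l * Nat.gcd m f'' := hleq.symm
          _ = 2 * (l' * Nat.gcd m f'') := by rw [hl']; ring
      omega
  -- step 3: compute the gcd
  have hlf2 : Nat.Coprime l (L (a+1) * f) := Nat.Coprime.mul_right hcop hlf
  rw [hFdg, show L (a+1) * (g * f) = g * (L (a+1) * f) from by ring, hLag,
    Nat.gcd_mul_left, hlf2]
  exact mul_one g

lemma two_u1 (hp : 0 < p) {a d : ℕ} (ha : 1 ≤ a) (hd : 1 ≤ d) :
    L a * L d ≤ 2 * L (a+d) := by
  have h1 : L (a+d) = L (a+1) * F d + q * L a * F (d-1) := by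
    have := addL (p := p) (q := q) a (d-1)
    rw [show a + (d-1) + 1 = a + d from by omega, show d - 1 + 1 = d from by omega] at this
    exact this
  have h2 : L d = F (d+1) + q * F (d-1) := by
    have := LF (p := p) (q := q) (d-1)
    rw [show d - 1 + 1 = d from by omega, show d - 1 + 2 = d + 1 from by omega] at this
    exact this
  have h3 : F (d+1) = p * F d + q * F (d-1) := by
    have := Frec (p := p) (q := q) (d-1)
    rw [show d - 1 + 2 = d + 1 from by omega, show d - 1 + 1 = d from by omega] at this
    exact this
  have h4 : p * L a ≤ 2 * L (a+1) := by
    have := Lrec (p := p) (q := q) (a-1)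
    rw [show a - 1 + 2 = a + 1 from by omega, show a - 1 + 1 = a from by omega] at this
    calc p * L a ≤ p * L a + q * L (a-1) := Nat.le_add_right _ _
      _ = L (a+1) := this.symm
      _ ≤ 2 * L (a+1) := by omega
  calc L a * L d = p * L a * F d + q * L a * F (d-1) + q * L a * F (d-1) := by
        rw [h2, h3]; ring
    _ ≤ 2 * L (a+1) * F d + q * L a * F (d-1) + q * L a * F (d-1) := by
        have := Nat.mul_le_mul_right (F d) h4
        omega
    _ = 2 * L (a+d) := by rw [h1]; ring


/-- Chicken-McNugget-style: if `gcd m n ∣ N` and `N` is big enough, `N ∈ ⟨m,n⟩`. -/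
lemma rep_of_big {m n N : ℕ} (hm : 0 < m) (hn : 0 < n)
    (hN : Nat.gcd m n ∣ N) (hbig : (m / Nat.gcd m n) * n ≤ N) :
    ∃ x y : ℕ, N = x * m + y * n := by
  set g := Nat.gcd m n with hg
  have hgpos : 0 < g := Nat.gcd_pos_of_pos_left _ hm
  set l := m / g with hl
  set n' := n / g with hn'
  set N' := N / g with hN'
  have hmg : m = g * l := (Nat.mul_div_cancel' (Nat.gcd_dvd_left _ _)).symm
  have hng : n = g * n' := (Nat.mul_div_cancel' (Nat.gcd_dvd_right _ _)).symm
  have hNg : N = g * N' := (Nat.mul_div_cancel' hN).symm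
  have hcop : Nat.Coprime l n' := Nat.coprime_div_gcd_div_gcd hgpos
  have hlpos : 0 < l := by
    rcases Nat.eq_zero_or_pos l with h | h
    · rw [h, mul_zero] at hmg; omega
    · exact h
  have hbig' : l * n' ≤ N' := by
    have h1 : l * n ≤ N := hbig
    rw [hng, hNg] at h1
    have : l * (g * n') = g * (l * n') := by ring
    rw [this] at h1
    exact Nat.le_of_mul_le_mul_left h1 hgpos
  rcases Nat.eq_zero_or_pos n' with hz | hn'pos
  · rw [hz, mul_zero] at hng; omega
  rcases Nat.lt_or_ge l 2 with hl1 | hl2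
  -- l = 1 : m = g divides N
  · have : l = 1 := by omega
    refine ⟨N', 0, ?_⟩
    rw [hNg, hmg, this]
    ring
  · obtain ⟨b, -, hb⟩ := Nat.exists_mul_mod_eq_one_of_coprime hcop.symm hl2
    set y := (N' * b) % l with hy
    have hyl : y < l := Nat.mod_lt _ (by omega)
    have hb' : n' * b ≡ 1 [MOD l] := by
      unfold Nat.ModEq
      rw [hb, Nat.mod_eq_of_lt (by omega)]
    have h1 : N' * b * n' ≡ N' [MOD l] := by
      calc N' * b * n' = N' * (n' * b) := by ring
        _ ≡ N' * 1 [MOD l] := Nat.ModEq.mul_left N' hb'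
        _ = N' := by ring
    have hmodeq : y ≡ N' * b [MOD l] := Nat.mod_modEq _ _
    have hfin : y * n' ≡ N' [MOD l] := (hmodeq.mul_right n').trans h1
    have hle : y * n' ≤ N' := by
      calc y * n' ≤ (l - 1) * n' := Nat.mul_le_mul_right _ (by omega)
        _ ≤ l * n' := Nat.mul_le_mul_right _ (by omega)
        _ ≤ N' := hbig'
    obtain ⟨x, hx⟩ := (Nat.modEq_iff_dvd' hle).mp hfin
    have hN'eq : N' = l * x + y * n' := by
      have := (Nat.sub_eq_iff_eq_add hle).mp hx
      exact this
    refine ⟨x, y, ?_⟩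
    rw [hNg, hmg, hng, hN'eq]
    ring

section EvenCase

variable (hp : 0 < p) (hq : 0 < q) (hpq : Nat.Coprime p q)
variable {a d : ℕ} (ha : 1 ≤ a) (hd : 1 ≤ d) (hd2 : 2 ∣ d)

-- abbreviations cannot use variable binders easily; state lemmas directly

include hp hq hpq ha hd hd2

lemma g_dvd_u (k : ℕ) (hk : 1 ≤ k) : Nat.gcd (L a) (F d) ∣ L (a + k*d) := by
  have h1 : L (a + k*d) = L (a+1) * F (k*d) + q * L a * F (k*d - 1) := by
    have := addL (p := p) (q := q) a (k*d - 1)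
    rw [show a + (k*d-1) + 1 = a + k*d from by
        have : 1 ≤ k*d := Nat.one_le_iff_ne_zero.mpr (by positivity)
        omega,
      show k*d - 1 + 1 = k*d from by
        have : 1 ≤ k*d := Nat.one_le_iff_ne_zero.mpr (by positivity)
        omega] at this
    exact this
  rw [h1]
  refine Nat.dvd_add ?_ ?_
  · exact Dvd.dvd.mul_left ((Nat.gcd_dvd_right _ _).trans (Fdvd hd k)) _
  · exact Dvd.dvd.mul_right (Dvd.dvd.mul_left (Nat.gcd_dvd_left _ _) q) _

lemma even_ident (m : ℕ) : L (m + 2*d) + q^d * L m = L d * L (m + d) :=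
  Zident_even (by obtain ⟨k,hk⟩ := hd2; exact ⟨k, by omega⟩ : Even d) m

/-- Existence of a representation given a valid `t`. -/
lemma repr_of_t (t : ℕ)
    (h1 : q^d * Nat.gcd (L a) (F d) ≤ t * L (a+d))
    (h2 : (L a / Nat.gcd (L a) (F d)) * t ≤ L d) :
    ∃ α β : ℕ, L (a + 2*d) = α * L a + β * L (a+d) := by
  set g := Nat.gcd (L a) (F d) with hg
  have hgpos : 0 < g := Nat.gcd_pos_of_pos_left _ (L_pos hp a)
  set l := L a / g with hl
  have hu0 : L a = g * l := (Nat.mul_div_cancel' (Nat.gcd_dvd_left _ _)).symm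
  have hgu1 : g ∣ L (a+d) := by
    have := g_dvd_u hp hq hpq ha hd hd2 1 le_rfl
    rwa [one_mul] at this
  set u1' := L (a+d) / g with hu1'
  have hu1 : L (a+d) = g * u1' := (Nat.mul_div_cancel' hgu1).symm
  have hid : L (a + 2*d) + q^d * L a = L d * L (a+d) := even_ident hp hq hpq ha hd hd2 a
  have hqd : q^d ≤ t * u1' := by
    have h1' : q^d * g ≤ t * (g * u1') := by rw [← hu1]; exact h1
    have : q^d * g ≤ (t * u1') * g := by
      calc q^d * g ≤ t * (g * u1') := h1'
        _ = (t * u1') * g := by ring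
    exact Nat.le_of_mul_le_mul_right this hgpos
  set α := t * u1' - q^d with hα
  set β := L d - l * t with hβ
  have hαe : α + q^d = t * u1' := Nat.sub_add_cancel hqd
  have hβe : β + l * t = L d := Nat.sub_add_cancel h2
  refine ⟨α, β, ?_⟩
  have key : (α + q^d) * L a = (l * t) * L (a+d) := by
    rw [hαe, hu0, hu1]; ring
  have e1 : (α + q^d) * L a = α * L a + q^d * L a := by ring
  have e2 : (β + l * t) * L (a+d) = β * L (a+d) + (l * t) * L (a+d) := by ring
  have e3 : (β + l * t) * L (a+d) = L d * L (a+d) := by rw [hβe]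
  linarith

/-- Claim A: if `l ≤ L d`, a representation exists. -/
lemma claimA (hle : L a / Nat.gcd (L a) (F d) ≤ L d) :
    ∃ α β : ℕ, L (a + 2*d) = α * L a + β * L (a+d) := by
  set g := Nat.gcd (L a) (F d) with hg
  have hgpos : 0 < g := Nat.gcd_pos_of_pos_left _ (L_pos hp a)
  set l := L a / g with hl
  have hu0 : L a = g * l := (Nat.mul_div_cancel' (Nat.gcd_dvd_left _ _)).symm
  have hu1pos : 0 < L (a+d) := L_pos hp _
  rcases le_or_gt (q^d * g) (L (a+d)) with hcase | hcase
  · exact repr_of_t hp hq hpq ha hd hd2 1 (by simpa using hcase) (by simpa using hle)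
  · set t := q^d * g / L (a+d) + 1 with ht
    have h1 : q^d * g ≤ t * L (a+d) := by
      have h2' := Nat.div_add_mod (q^d * g) (L (a+d))
      have h3' := Nat.mod_lt (q^d * g) hu1pos
      have e : t * L (a+d) = L (a+d) * (q^d * g / L (a+d)) + L (a+d) := by rw [ht]; ring
      linarith
    have hub : t * L (a+d) ≤ 2 * (q^d * g) := by
      have hdivle : (q^d * g / L (a+d)) * L (a+d) ≤ q^d * g := Nat.div_mul_le_self _ _
      have : t * L (a+d) = (q^d * g / L (a+d)) * L (a+d) + L (a+d) := by rw [ht]; ring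
      omega
    -- l * t ≤ L d
    have h2 : l * t ≤ L d := by
      -- 2 * (l*t) * u1 ≤ 4 q^d g l = 4 q^d * L a ≤ (L d)^2 * L a ≤ L d * (2 u1)
      have hLd2 : 4 * q^d ≤ L d * L d := by
        obtain ⟨k, hk⟩ := hd2
        have h2k := L2k (p := p) (q := q) k
        have : (2 * q^k) * (2 * q^k) ≤ L (2*k) * L (2*k) := Nat.mul_le_mul h2k h2k
        rw [← hk] at this
        calc 4 * q^d = (2 * q^k) * (2 * q^k) := by
              rw [hk, show (2:ℕ)*k = k + k from two_mul k, pow_add]; ring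
          _ ≤ L d * L d := this
      have c1 : 2 * (l * t * L (a+d)) ≤ 4 * (q^d * (g * l)) := by
        calc 2 * (l * t * L (a+d)) = l * (2 * (t * L (a+d))) := by ring
          _ ≤ l * (2 * (2 * (q^d * g))) := by
              refine Nat.mul_le_mul_left _ ?_
              omega
          _ = 4 * (q^d * (g * l)) := by ring
      have c2 : 4 * (q^d * (g * l)) ≤ L d * L d * (g * l) := by
        calc 4 * (q^d * (g * l)) = (4 * q^d) * (g * l) := by ring
          _ ≤ (L d * L d) * (g * l) := Nat.mul_le_mul_right _ hLd2
      have c3 : L d * L d * (g * l) ≤ L d * (2 * L (a+d)) := by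
        calc L d * L d * (g * l) = L d * ((g*l) * L d) := by ring
          _ ≤ L d * (2 * L (a+d)) := by
              refine Nat.mul_le_mul_left _ ?_
              rw [← hu0]
              exact two_u1 hp ha hd
      have : 2 * (l * t * L (a+d)) ≤ 2 * (L d * L (a+d)) := by
        calc 2 * (l * t * L (a+d)) ≤ L d * (2 * L (a+d)) := le_trans c1 (le_trans c2 c3)
          _ = 2 * (L d * L (a+d)) := by ring
      have h4 : l * t * L (a+d) ≤ L d * L (a+d) := by omega
      exact Nat.le_of_mul_le_mul_right
        (by calc (l*t) * L (a+d) = l * t * L (a+d) := by ring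
              _ ≤ L d * L (a+d) := h4) hu1pos
    exact repr_of_t hp hq hpq ha hd hd2 t h1 h2

/-- Claim B: a representation forces `l ≤ L d`. -/
lemma claimB {α β : ℕ} (hrep : L (a + 2*d) = α * L a + β * L (a+d)) :
    L a / Nat.gcd (L a) (F d) ≤ L d := by
  set g := Nat.gcd (L a) (F d) with hg
  have hgpos : 0 < g := Nat.gcd_pos_of_pos_left _ (L_pos hp a)
  have hgcdeq : Nat.gcd (L a) (L (a+d)) = g := gcd_key hp hq hpq ha hd2 hd
  set l := L a / g with hl
  have hu0 : L a = g * l := (Nat.mul_div_cancel' (Nat.gcd_dvd_left _ _)).symm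
  have hu0pos : 0 < L a := L_pos hp a
  have hu1pos : 0 < L (a+d) := L_pos hp _
  have hid : L (a + 2*d) + q^d * L a = L d * L (a+d) := even_ident hp hq hpq ha hd hd2 a
  have hqd : 0 < q^d := pow_pos hq d
  have hβ : β < L d := by
    by_contra hcon
    push_neg at hcon
    have : L d * L (a+d) ≤ β * L (a+d) := Nat.mul_le_mul_right _ hcon
    have hpos : 0 < α * L a + q^d * L a := by positivity
    omega
  set s := L d - β with hs
  have hse : s + β = L d := by omega
  have hkey : s * L (a+d) = (α + q^d) * L a := by
    have e1 : (s + β) * L (a+d) = L d * L (a+d) := by rw [hse]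
    have e2 : (s + β) * L (a+d) = s * L (a+d) + β * L (a+d) := by ring
    have e3 : (α + q^d) * L a = α * L a + q^d * L a := by ring
    linarith
  -- l divides s
  have hcop : Nat.Coprime l (L (a+d) / g) := by
    have := Nat.coprime_div_gcd_div_gcd (m := L a) (n := L (a+d)) (by rw [hgcdeq]; exact hgpos)
    rwa [hgcdeq] at this
  have hgu1 : g ∣ L (a+d) := by rw [← hgcdeq]; exact Nat.gcd_dvd_right _ _
  set u1' := L (a+d) / g with hu1'
  have hu1 : L (a+d) = g * u1' := (Nat.mul_div_cancel' hgu1).symm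
  have hldvd : l ∣ s * u1' := by
    have h5 : g * (s * u1') = g * ((α + q^d) * l) := by
      calc g * (s * u1') = s * (g * u1') := by ring
        _ = s * L (a+d) := by rw [← hu1]
        _ = (α + q^d) * L a := hkey
        _ = (α + q^d) * (g * l) := by rw [← hu0]
        _ = g * ((α + q^d) * l) := by ring
    have h6 : s * u1' = (α + q^d) * l := Nat.eq_of_mul_eq_mul_left hgpos h5
    exact ⟨α + q^d, by rw [h6]; ring⟩
  have hls : l ∣ s := (Nat.Coprime.dvd_of_dvd_mul_right hcop) hldvd
  have hspos : 0 < s := by omega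
  calc l ≤ s := Nat.le_of_dvd hspos hls
    _ ≤ L d := by omega

lemma four_qd : 4 * q^d ≤ L d * L d := by
  obtain ⟨k, hk⟩ := hd2
  have h2k := L2k (p := p) (q := q) k
  have h := Nat.mul_le_mul h2k h2k
  rw [← hk] at h
  calc 4 * q^d = (2 * q^k) * (2 * q^k) := by
        rw [hk, show (2:ℕ)*k = k + k from two_mul k, pow_add]; ring
    _ ≤ L d * L d := h

lemma Ld_sq : L d + 3 * q^d ≤ L d * L d := by
  have h4 := four_qd hp hq hpq ha hd hd2
  have hL3 : 3 ≤ L d := by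
    have h2 : L 2 ≤ L d := L_mono hp (by omega) (by omega)
    rw [L2] at h2
    nlinarith
  rcases le_or_gt (L d) (q^d) with hc | hc
  · omega
  · rcases le_or_gt 4 (L d) with hc2 | hc2
    · have : 4 * L d ≤ L d * L d := Nat.mul_le_mul_right _ hc2
      omega
    · have hLd3 : L d = 3 := by omega
      have : L d * L d = 9 := by rw [hLd3]
      omega

lemma growth {k : ℕ} (hk : 3 ≤ k) : L d * L (a+d) ≤ L (a + k*d) := by
  have hid : L (a + 2*d) + q^d * L a = L d * L (a+d) := even_ident hp hq hpq ha hd hd2 a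
  have hid2 : L (a + 3*d) + q^d * L (a+d) = L d * L (a + 2*d) := by
    have := even_ident hp hq hpq ha hd hd2 (a+d)
    rw [show a + d + 2*d = a + 3*d from by ring, show a + d + d = a + 2*d from by ring] at this
    exact this
  have step1 : (L d + q^d) * L (a+d) ≤ L d * L (a + 2*d) := by
    have e1 : L d * (L (a + 2*d) + q^d * L a) = L d * L (a+2*d) + q^d * (L d * L a) := by ring
    have e2 : L d * (L d * L (a+d)) = (L d * L d) * L (a+d) := by ring
    have e3 : L d * (L (a+2*d) + q^d * L a) = L d * (L d * L (a+d)) := by rw [hid]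
    have e4 : q^d * (L d * L a) ≤ 2 * q^d * L (a+d) := by
      have := two_u1 (q := q) hp ha hd
      calc q^d * (L d * L a) = q^d * (L a * L d) := by ring
        _ ≤ q^d * (2 * L (a+d)) := Nat.mul_le_mul_left _ this
        _ = 2 * q^d * L (a+d) := by ring
    have e5 : (L d + 3 * q^d) * L (a+d) ≤ (L d * L d) * L (a+d) :=
      Nat.mul_le_mul_right _ (Ld_sq hp hq hpq ha hd hd2)
    have e6 : (L d + 3 * q^d) * L (a+d) = (L d + q^d) * L (a+d) + 2 * q^d * L (a+d) := by ring
    linarith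
  have step2 : L d * L (a+d) ≤ L (a + 3*d) := by
    have e : (L d + q^d) * L (a+d) = L d * L (a+d) + q^d * L (a+d) := by ring
    linarith
  calc L d * L (a+d) ≤ L (a + 3*d) := step2
    _ ≤ L (a + k*d) := L_mono hp (by omega) (by
        have : 3 * d ≤ k * d := Nat.mul_le_mul_right _ hk
        omega)

lemma even_moreover {α β : ℕ} (hrep : L (a + 2*d) = α * L a + β * L (a+d))
    {k : ℕ} (hk : 2 ≤ k) : ∃ x y : ℕ, L (a + k*d) = x * L a + y * L (a+d) := by
  rcases Nat.eq_or_lt_of_le hk with h2 | h3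
  · exact ⟨α, β, by rw [← h2]; exact hrep⟩
  · have hk3 : 3 ≤ k := h3
    have hgcdeq : Nat.gcd (L a) (L (a+d)) = Nat.gcd (L a) (F d) := gcd_key hp hq hpq ha hd2 hd
    have hle : L a / Nat.gcd (L a) (F d) ≤ L d := claimB hp hq hpq ha hd hd2 hrep
    refine rep_of_big (L_pos hp a) (L_pos hp (a+d)) ?_ ?_
    · rw [hgcdeq]
      exact g_dvd_u hp hq hpq ha hd hd2 k (by omega)
    · rw [hgcdeq]
      calc (L a / Nat.gcd (L a) (F d)) * L (a+d) ≤ L d * L (a+d) :=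
            Nat.mul_le_mul_right _ hle
        _ ≤ L (a + k*d) := growth hp hq hpq ha hd hd2 hk3

lemma lcm_bridge :
    (Nat.lcm (L a) (F d) ≤ F (2*d) ↔ L a / Nat.gcd (L a) (F d) ≤ L d) := by
  set g := Nat.gcd (L a) (F d) with hg
  have hgpos : 0 < g := Nat.gcd_pos_of_pos_left _ (L_pos hp a)
  set l := L a / g with hl
  have hu0 : L a = g * l := (Nat.mul_div_cancel' (Nat.gcd_dvd_left _ _)).symm
  have hFpos : 0 < F d := F_pos hp d hd
  have hlcm : Nat.lcm (L a) (F d) = l * F d := by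
    have h1 : g * Nat.lcm (L a) (F d) = g * (l * F d) := by
      rw [Nat.gcd_mul_lcm]
      calc L a * F d = (g * l) * F d := by rw [← hu0]
        _ = g * (l * F d) := by ring
    exact Nat.eq_of_mul_eq_mul_left hgpos h1
  rw [hlcm, F2d hd]
  constructor
  · intro h
    have : l * F d ≤ L d * F d := by
      calc l * F d ≤ F d * L d := h
        _ = L d * F d := by ring
    exact Nat.le_of_mul_le_mul_right this hFpos
  · intro h
    calc l * F d ≤ L d * F d := Nat.mul_le_mul_right _ h
      _ = F d * L d := by ring

end EvenCase

section OddCase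

variable (hp : 0 < p) (hq : 0 < q)
variable {a d : ℕ} (ha : 1 ≤ a) (hd : 1 ≤ d) (hdo : Odd d)

include hp hq ha hd hdo

lemma odd_rep (k : ℕ) : ∃ α β : ℕ, L (a + k*d) = α * L a + β * L (a+d) := by
  induction k using Nat.twoStepInduction with
  | zero => exact ⟨1, 0, by simp⟩
  | one => exact ⟨0, 1, by simp⟩
  | more k ih ih2 =>
    obtain ⟨α2, β2, h2⟩ := ih
    obtain ⟨α1, β1, h1⟩ := ih2
    have hident : L (a + (k+2)*d) = L d * L (a + (k+1)*d) + q^d * L (a + k*d) := by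
      have := Zident_odd (p := p) (q := q) hdo (a + k*d)
      rw [show a + k*d + 2*d = a + (k+2)*d from by ring,
        show a + k*d + d = a + (k+1)*d from by ring] at this
      exact this
    refine ⟨L d * α1 + q^d * α2, L d * β1 + q^d * β2, ?_⟩
    rw [hident, h1, h2]
    ring

end OddCase


end PQaux


open PQaux in
/-- With `d_i = L_{a + (i−1)·d}` for `1 ≤ i ≤ n` in the
`(p,q)`-Lucas sequence and `n ≥ 3`, `d₃ ∈ ℕd₁ + ℕd₂` iff `d` is odd or
`F_{2d} ≥ lcm(d₁, F_d)`; moreover, if `d₃ ∈ ℕd₁ + ℕd₂`, then `d_i ∈ ℕd₁ + ℕd₂`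
for every `3 ≤ i ≤ n`. -/
theorem stmt17 (p q : ℕ) (hp : 0 < p) (hq : 0 < q) (hpq : Nat.gcd p q = 1)
    (a d : ℕ) (ha : 0 < a) (hd : 0 < d) (n : ℕ) (hn : 3 ≤ n)
    (D : ℕ → ℕ) (hD : ∀ i, 1 ≤ i → D i = pqLucas p q (a + (i - 1) * d)) :
    ((∃ α β : ℕ, D 3 = α * D 1 + β * D 2) ↔
        (Odd d ∨ Nat.lcm (D 1) (pqFib p q d) ≤ pqFib p q (2 * d))) ∧
      ((∃ α β : ℕ, D 3 = α * D 1 + β * D 2) →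
        ∀ i, 3 ≤ i → i ≤ n → ∃ α β : ℕ, D i = α * D 1 + β * D 2) := by
  have hpq' : Nat.Coprime p q := hpq
  have ha1 : 1 ≤ a := ha
  have hd1 : 1 ≤ d := hd
  have hD1 : D 1 = pqLucas p q a := by rw [hD 1 le_rfl]; norm_num
  have hD2 : D 2 = pqLucas p q (a + d) := by rw [hD 2 (by norm_num)]; norm_num
  have hD3 : D 3 = pqLucas p q (a + 2*d) := by rw [hD 3 (by norm_num)]
  rcases Nat.even_or_odd d with hev | hodd
  · -- d even
    have hd2 : 2 ∣ d := by obtain ⟨k, hk⟩ := hev; exact ⟨k, by omega⟩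
    constructor
    · constructor
      · rintro ⟨α, β, h⟩
        right
        rw [hD1, hD2, hD3] at h
        rw [hD1]
        exact (lcm_bridge hp hq hpq' ha1 hd1 hd2).mpr
          (claimB hp hq hpq' ha1 hd1 hd2 h)
      · rintro (ho | hlcm)
        · exact absurd ho (Nat.not_odd_iff_even.mpr hev)
        · rw [hD1] at hlcm
          obtain ⟨α, β, h⟩ := claimA hp hq hpq' ha1 hd1 hd2
            ((lcm_bridge hp hq hpq' ha1 hd1 hd2).mp hlcm)
          exact ⟨α, β, by rw [hD1, hD2, hD3]; exact h⟩
    · rintro ⟨α, β, h3⟩ i hi3 _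
      rw [hD1, hD2, hD3] at h3
      obtain ⟨x, y, hxy⟩ := even_moreover hp hq hpq' ha1 hd1 hd2 h3
        (k := i - 1) (by omega)
      exact ⟨x, y, by rw [hD i (by omega), hD1, hD2]; exact hxy⟩
  · -- d odd
    constructor
    · constructor
      · intro _
        exact Or.inl hodd
      · intro _
        obtain ⟨α, β, h⟩ := odd_rep hp hq ha1 hd1 hodd 2
        exact ⟨α, β, by rw [hD1, hD2, hD3]; exact h⟩
    · rintro _ i hi3 _
      obtain ⟨α, β, h⟩ := odd_rep hp hq ha1 hd1 hodd (i - 1)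
      exact ⟨α, β, by rw [hD i (by omega), hD1, hD2]; exact h⟩
end

section
/- Let p, q be relatively prime positive integers and {F_n} the (p,q)-Fibonacci sequence. Then for all positive integers a and b, gcd(F_a, F_b) = F_{gcd(a, b)}. -/
open MvPolynomial

namespace PQAux
variable (p q : ℕ)

lemma fib_two_step (n : ℕ) :
    pqFib p q (n + 2) = p * pqFib p q (n + 1) + q * pqFib p q n := rfl

lemma fib_add (m : ℕ) : ∀ n, pqFib p q (m + n + 1)
    = q * pqFib p q m * pqFib p q n + pqFib p q (m + 1) * pqFib p q (n + 1)
  | 0 => by simp [pqFib]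
  | 1 => by
      show pqFib p q (m + 2) = _
      rw [fib_two_step]
      simp [pqFib]; ring
  | n + 2 => by
      have h1 := fib_add m n
      have h2 := fib_add m (n + 1)
      have e : m + (n + 2) + 1 = (m + n + 1) + 2 := by omega
      rw [e, fib_two_step]
      have e1 : m + n + 1 + 1 = m + (n + 1) + 1 := by omega
      rw [e1, h2, h1, show n + 2 + 1 = (n + 1) + 2 by omega,
        fib_two_step p q (n + 1), show n + 1 + 1 = n + 2 by omega, fib_two_step p q n]
      ring

lemma coprime_q (hpq : Nat.Coprime p q) : ∀ n, Nat.Coprime q (pqFib p q (n + 1))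
  | 0 => by simp [pqFib]
  | n + 1 => by
      have ih := coprime_q hpq n
      rw [fib_two_step]
      rw [Nat.coprime_add_mul_left_right q (p * pqFib p q (n+1)) (pqFib p q n)]
      exact (hpq.symm.mul_right ih)

lemma coprime_consec (hpq : Nat.Coprime p q) :
    ∀ n, Nat.Coprime (pqFib p q n) (pqFib p q (n + 1))
  | 0 => by simp [pqFib]
  | n + 1 => by
      have ih := coprime_consec hpq n
      rw [fib_two_step]
      have : p * pqFib p q (n+1) + q * pqFib p q n
          = q * pqFib p q n + pqFib p q (n+1) * p := by ring
      rw [this, Nat.coprime_add_mul_left_right]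
      exact (coprime_q p q hpq n).symm.mul_right ih.symm

lemma gcd_add_self (hpq : Nat.Coprime p q) (m n : ℕ) :
    Nat.gcd (pqFib p q m) (pqFib p q (n + m)) = Nat.gcd (pqFib p q m) (pqFib p q n) := by
  rcases n with _ | n
  · simp [pqFib]
  · have e : n + 1 + m = n + m + 1 := by omega
    rw [e, fib_add]
    have e2 : q * pqFib p q n * pqFib p q m + pqFib p q (n+1) * pqFib p q (m+1)
        = pqFib p q (n+1) * pqFib p q (m+1) + (q * pqFib p q n) * pqFib p q m := by ring
    rw [e2, Nat.gcd_add_mul_right_right,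
      Nat.Coprime.gcd_mul_right_cancel_right _ (coprime_consec p q hpq m).symm]

lemma gcd_add_mul_self (hpq : Nat.Coprime p q) (m n : ℕ) : ∀ k,
    Nat.gcd (pqFib p q m) (pqFib p q (n + k * m)) = Nat.gcd (pqFib p q m) (pqFib p q n)
  | 0 => by simp
  | k + 1 => by
      have e : n + (k + 1) * m = (n + k * m) + m := by ring
      rw [e, gcd_add_self p q hpq, gcd_add_mul_self hpq m n k]

theorem fib_gcd (hpq : Nat.Coprime p q) (m n : ℕ) :
    pqFib p q (Nat.gcd m n) = Nat.gcd (pqFib p q m) (pqFib p q n) := by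
  induction m, n using Nat.gcd.induction with
  | H0 n => simp [pqFib]
  | H1 m n hm ih =>
      rw [Nat.gcd_rec m n] at *
      conv_rhs => rw [← Nat.mod_add_div' n m]
      rw [gcd_add_mul_self p q hpq m (n % m) (n / m), ih, Nat.gcd_comm]

end PQAux

/-- For relatively prime positive integers `p, q` and the
`(p,q)`-Fibonacci sequence `F`, we have `gcd(F_a, F_b) = F_{gcd(a,b)}` for all
positive integers `a, b`. -/
theorem stmt19 (p q : ℕ) (hp : 0 < p) (hq : 0 < q) (hpq : Nat.gcd p q = 1)
    (a b : ℕ) (ha : 0 < a) (hb : 0 < b) :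
    Nat.gcd (pqFib p q a) (pqFib p q b) = pqFib p q (Nat.gcd a b) := by
  exact (PQAux.fib_gcd p q hpq a b).symm
end
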